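/- arXiv:0704.2838 — 8 statements merged into one kernel-verified Lean document; each statement's English description precedes it below -/
import Mathlib

section
/- For every a ∈ ℂ∖{0} and every integer k ≥ 1, the identity F_k(a)·F_k(aq²) = F_{k+1}(a)·F_{k−1}(aq²) + F_k(−aq) holds in R. (This is the twisted T-system of type A_2^{(2)}: the explicit q-characters of the Kirillov–Reshetikhin modules of the twisted quantum loop algebra of type A_2^{(2)} solve the twisted T-system.) -/
noncomputable section

/-- Monomials: the free abelian group on `ℂˣ` written additively;
`Finsupp.single a 1` corresponds to the generator `Z_a`. -/
abbrev Mon : Type := ℂˣ →₀ ℤ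

/-- The group ring `R = ℤ[G]`, i.e. Laurent polynomials in the variables `Z_a`. -/
abbrev LR : Type := AddMonoidAlgebra ℤ Mon

/-- The generator `Z_a` of the free abelian group of monomials. -/
def Z (a : ℂˣ) : Mon := Finsupp.single a 1

/-- `A_a = Z_{aq} · Z_{aq⁻¹} · Z_{-a}⁻¹` (written additively). -/
def A (q a : ℂˣ) : Mon := Z (a * q) + Z (a * q⁻¹) - Z (-a)

/-- The monomial `m_{k,a} = ∏_{s=1}^{k} Z_{a q^{2s-2}}` (written additively). -/
def mKR (q : ℂˣ) (k : ℕ) (a : ℂˣ) : Mon := ∑ s ∈ Finset.range k, Z (a * q ^ (2 * s))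

/-- The twisted q-character
`F_k(a) = m_{k,a} · Σ_{0 ≤ R' ≤ R ≤ k} (∏_{r=1}^{R} A_{aq^{2k+1-2r}}⁻¹)(∏_{r'=1}^{R'} A_{-aq^{2k+2-2r'}}⁻¹)`
of the Kirillov-Reshetikhin module `W_{k,a}` of the twisted quantum loop algebra of
type `A₂⁽²⁾`, as an element of the group ring `ℤ[G]`. -/
def FKR (q : ℂˣ) (k : ℕ) (a : ℂˣ) : LR :=
  ∑ R ∈ Finset.range (k + 1), ∑ R' ∈ Finset.range (R + 1),
    AddMonoidAlgebra.single
      (mKR q k a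
        - ∑ r ∈ Finset.range R, A q (a * q ^ (2 * (k : ℤ) + 1 - 2 * ((r : ℤ) + 1)))
        - ∑ r' ∈ Finset.range R', A q (-(a * q ^ (2 * (k : ℤ) + 2 - 2 * ((r' : ℤ) + 1))))) 1

section Comb
variable {M : Type*} [AddCommMonoid M]

lemma tri_swap (f : ℕ → ℕ → M) (n : ℕ) :
    ∑ t ∈ Finset.range (n+1), ∑ t' ∈ Finset.range t, f t t'
      = ∑ t' ∈ Finset.range n, ∑ t ∈ Finset.Ico (t'+1) (n+1), f t t' := by
  induction n with
  | zero => simp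
  | succ n ih =>
    rw [Finset.sum_range_succ, ih]
    have h1 : ∀ t' ∈ Finset.range (n+1), ∑ t ∈ Finset.Ico (t'+1) (n+1+1), f t t'
        = (∑ t ∈ Finset.Ico (t'+1) (n+1), f t t') + f (n+1) t' := by
      intro t' ht'
      rw [Finset.sum_Ico_succ_top (by simp at ht'; omega)]
    rw [Finset.sum_congr rfl h1, Finset.sum_add_distrib]
    congr 1
    rw [Finset.sum_range_succ]
    simp

lemma rsplit (g : ℕ → ℕ → M) (n : ℕ) :
    ∑ p ∈ Finset.range (n+1), ∑ r ∈ Finset.range (p+1), g p r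
    = (∑ p ∈ Finset.range (n+1), g p 0)
      + ∑ p ∈ Finset.range n, ∑ r ∈ Finset.range (p+1), g (p+1) (r+1) := by
  have h1 : ∀ p ∈ Finset.range (n+1), ∑ r ∈ Finset.range (p+1), g p r
      = g p 0 + ∑ r ∈ Finset.range p, g p (r+1) := by
    intro p _
    rw [Finset.sum_range_succ' (fun r => g p r) p]
    exact add_comm _ _
  rw [Finset.sum_congr rfl h1, Finset.sum_add_distrib]
  congr 1
  rw [Finset.sum_range_succ' (fun p => ∑ r ∈ Finset.range p, g p (r+1)) n]
  simp


lemma quad_comm (f : ℕ → ℕ → ℕ → ℕ → M) (n n' : ℕ) :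
    ∑ i ∈ Finset.range n, ∑ j ∈ Finset.range (i+1),
      ∑ p ∈ Finset.range n', ∑ r ∈ Finset.range (p+1), f i j p r
    = ∑ p ∈ Finset.range n', ∑ r ∈ Finset.range (p+1),
        ∑ i ∈ Finset.range n, ∑ j ∈ Finset.range (i+1), f i j p r := by
  calc ∑ i ∈ Finset.range n, ∑ j ∈ Finset.range (i+1),
      ∑ p ∈ Finset.range n', ∑ r ∈ Finset.range (p+1), f i j p r
      = ∑ i ∈ Finset.range n, ∑ p ∈ Finset.range n',
          ∑ j ∈ Finset.range (i+1), ∑ r ∈ Finset.range (p+1), f i j p r :=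
        Finset.sum_congr rfl fun i _ => Finset.sum_comm
    _ = ∑ p ∈ Finset.range n', ∑ i ∈ Finset.range n,
          ∑ j ∈ Finset.range (i+1), ∑ r ∈ Finset.range (p+1), f i j p r :=
        Finset.sum_comm
    _ = ∑ p ∈ Finset.range n', ∑ i ∈ Finset.range n,
          ∑ r ∈ Finset.range (p+1), ∑ j ∈ Finset.range (i+1), f i j p r :=
        Finset.sum_congr rfl fun p _ => Finset.sum_congr rfl fun i _ => Finset.sum_comm
    _ = ∑ p ∈ Finset.range n', ∑ r ∈ Finset.range (p+1),
          ∑ i ∈ Finset.range n, ∑ j ∈ Finset.range (i+1), f i j p r :=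
        Finset.sum_congr rfl fun p _ => Finset.sum_comm

lemma comb (w : ℕ → ℕ → ℕ → ℕ → M) (k : ℕ)
    (ha : ∀ i j p r, w i j (p+1) (r+1) = w p r (i+1) (j+1))
    (hb : ∀ i j p, w i j (p+1) 0 = w p j (i+1) 0) :
    ∑ i ∈ Finset.range (k+1), ∑ j ∈ Finset.range (i+1),
      ∑ p ∈ Finset.range (k+1), ∑ r ∈ Finset.range (p+1), w i j p r
    = (∑ p ∈ Finset.range (k+2), ∑ r ∈ Finset.range (p+1),
        ∑ i ∈ Finset.range k, ∑ j ∈ Finset.range (i+1), w i j p r)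
      + ∑ t ∈ Finset.range (k+1), ∑ t' ∈ Finset.range (t+1), w k t t' 0 := by
  -- split both quadruple sums by the last index being 0 or a successor
  have LHSsplit : ∀ i ∈ Finset.range (k+1), ∀ j ∈ Finset.range (i+1),
      ∑ p ∈ Finset.range (k+1), ∑ r ∈ Finset.range (p+1), w i j p r
      = (∑ p ∈ Finset.range (k+1), w i j p 0)
        + ∑ p ∈ Finset.range k, ∑ r ∈ Finset.range (p+1), w i j (p+1) (r+1) := by
    intro i _ j _; exact rsplit (fun p r => w i j p r) k
  have e1 : ∑ i ∈ Finset.range (k+1), ∑ j ∈ Finset.range (i+1),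
      ∑ p ∈ Finset.range (k+1), ∑ r ∈ Finset.range (p+1), w i j p r
      = (∑ i ∈ Finset.range (k+1), ∑ j ∈ Finset.range (i+1),
          ∑ p ∈ Finset.range (k+1), w i j p 0)
        + ∑ i ∈ Finset.range (k+1), ∑ j ∈ Finset.range (i+1),
            ∑ p ∈ Finset.range k, ∑ r ∈ Finset.range (p+1), w i j (p+1) (r+1) := by
    rw [← Finset.sum_add_distrib]
    refine Finset.sum_congr rfl fun i hi => ?_
    rw [← Finset.sum_add_distrib]
    exact Finset.sum_congr rfl fun j hj => LHSsplit i hi j hj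
  have e2 : ∑ p ∈ Finset.range (k+2), ∑ r ∈ Finset.range (p+1),
        ∑ i ∈ Finset.range k, ∑ j ∈ Finset.range (i+1), w i j p r
      = (∑ p ∈ Finset.range (k+2), ∑ i ∈ Finset.range k, ∑ j ∈ Finset.range (i+1), w i j p 0)
        + ∑ p ∈ Finset.range (k+1), ∑ r ∈ Finset.range (p+1),
            ∑ i ∈ Finset.range k, ∑ j ∈ Finset.range (i+1), w i j (p+1) (r+1) :=
    rsplit (fun p r => ∑ i ∈ Finset.range k, ∑ j ∈ Finset.range (i+1), w i j p r) (k+1)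
  -- the "grade ≥ 1 in both variables" parts agree
  have eY : ∑ i ∈ Finset.range (k+1), ∑ j ∈ Finset.range (i+1),
      ∑ p ∈ Finset.range k, ∑ r ∈ Finset.range (p+1), w i j (p+1) (r+1)
      = ∑ p ∈ Finset.range (k+1), ∑ r ∈ Finset.range (p+1),
          ∑ i ∈ Finset.range k, ∑ j ∈ Finset.range (i+1), w i j (p+1) (r+1) := by
    simp_rw [ha]
  -- the X part
  have eX : ∑ i ∈ Finset.range (k+1), ∑ j ∈ Finset.range (i+1),
        ∑ p ∈ Finset.range (k+1), w i j p 0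
      = (∑ p ∈ Finset.range (k+2), ∑ i ∈ Finset.range k, ∑ j ∈ Finset.range (i+1), w i j p 0)
        + ∑ t ∈ Finset.range (k+1), ∑ t' ∈ Finset.range (t+1), w k t t' 0 := by
    rw [Finset.sum_range_succ]
    have hx' : ∑ p ∈ Finset.range (k+2), ∑ i ∈ Finset.range k,
        ∑ j ∈ Finset.range (i+1), w i j p 0
        = (∑ i ∈ Finset.range k, ∑ j ∈ Finset.range (i+1),
            ∑ p ∈ Finset.range (k+1), w i j p 0)
          + ∑ i ∈ Finset.range k, ∑ j ∈ Finset.range (i+1), w i j (k+1) 0 := by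
      rw [Finset.sum_comm]
      rw [← Finset.sum_add_distrib]
      refine Finset.sum_congr rfl fun i _ => ?_
      rw [Finset.sum_comm, ← Finset.sum_add_distrib]
      refine Finset.sum_congr rfl fun j _ => ?_
      rw [Finset.sum_range_succ]
    rw [hx']
    -- remains: the i = k slice
    have key : ∑ j ∈ Finset.range (k+1), ∑ p ∈ Finset.range (k+1), w k j p 0
        = (∑ i ∈ Finset.range k, ∑ j ∈ Finset.range (i+1), w i j (k+1) 0)
          + ∑ t ∈ Finset.range (k+1), ∑ t' ∈ Finset.range (t+1), w k t t' 0 := by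
      have hsplit : ∀ j ∈ Finset.range (k+1), ∑ p ∈ Finset.range (k+1), w k j p 0
          = w k j 0 0 + ∑ p ∈ Finset.range k, w k j (p+1) 0 := by
        intro j _
        rw [Finset.sum_range_succ' (fun p => w k j p 0) k]
        exact add_comm _ _
      have hD : ∀ t ∈ Finset.range (k+1), ∑ t' ∈ Finset.range (t+1), w k t t' 0
          = w k t 0 0 + ∑ t' ∈ Finset.range t, w k t (t'+1) 0 := by
        intro t _
        rw [Finset.sum_range_succ' (fun t' => w k t t' 0) t]
        exact add_comm _ _
      have core : ∑ j ∈ Finset.range (k+1), ∑ p ∈ Finset.range k, w k j (p+1) 0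
          = (∑ i ∈ Finset.range k, ∑ j ∈ Finset.range (i+1), w i j (k+1) 0)
            + ∑ t ∈ Finset.range (k+1), ∑ t' ∈ Finset.range t, w k t (t'+1) 0 := by
        calc ∑ j ∈ Finset.range (k+1), ∑ p ∈ Finset.range k, w k j (p+1) 0
            = ∑ p ∈ Finset.range k, ∑ j ∈ Finset.range (k+1), w p j (k+1) 0 := by
              simp_rw [hb]; exact Finset.sum_comm
          _ = ∑ p ∈ Finset.range k, ((∑ j ∈ Finset.range (p+1), w p j (k+1) 0)
                + ∑ j ∈ Finset.Ico (p+1) (k+1), w p j (k+1) 0) := by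
              refine Finset.sum_congr rfl fun p hp => ?_
              simp only [Finset.mem_range] at hp
              simp only [Finset.range_eq_Ico]
              exact (Finset.sum_Ico_consecutive (fun j => w p j (k+1) 0)
                (Nat.zero_le _) (by omega)).symm
          _ = (∑ i ∈ Finset.range k, ∑ j ∈ Finset.range (i+1), w i j (k+1) 0)
                + ∑ p ∈ Finset.range k, ∑ j ∈ Finset.Ico (p+1) (k+1), w p j (k+1) 0 := by
              rw [Finset.sum_add_distrib]
          _ = (∑ i ∈ Finset.range k, ∑ j ∈ Finset.range (i+1), w i j (k+1) 0)
                + ∑ t ∈ Finset.range (k+1), ∑ t' ∈ Finset.range t, w k t (t'+1) 0 := by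
              congr 1
              rw [tri_swap (fun t t' => w k t (t'+1) 0) k]
              refine Finset.sum_congr rfl fun p _ => ?_
              refine Finset.sum_congr rfl fun j _ => ?_
              exact (hb k j p).symm
      rw [Finset.sum_congr rfl hsplit, Finset.sum_congr rfl hD,
        Finset.sum_add_distrib, Finset.sum_add_distrib, core]
      abel
    rw [key]
    abel
  rw [e1, e2, eX, eY]
  abel

end Comb


namespace TT

def sgl (m : Mon) : LR := AddMonoidAlgebra.single m 1

lemma sgl_mul (m n : Mon) : sgl m * sgl n = sgl (m + n) := by
  simp [sgl, AddMonoidAlgebra.single_mul_single]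

def Pa (q a : ℂˣ) (k R : ℕ) : Mon :=
  ∑ r ∈ Finset.range R, A q (a * q ^ (2 * (k : ℤ) + 1 - 2 * ((r : ℤ) + 1)))

def Qa (q a : ℂˣ) (k R' : ℕ) : Mon :=
  ∑ r' ∈ Finset.range R', A q (-(a * q ^ (2 * (k : ℤ) + 2 - 2 * ((r' : ℤ) + 1))))

lemma Qa_zero (q a : ℂˣ) (k : ℕ) : Qa q a k 0 = 0 := by simp [Qa]

lemma upow (a q : ℂˣ) (n : ℕ) (m t : ℤ) (h : (n:ℤ) + m = t) :
    (a * q ^ n) * q ^ m = a * q ^ t := by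
  subst h; rw [mul_assoc, ← zpow_natCast q n, ← zpow_add]

-- L1 : Pa for shifted spectral parameter
lemma Pa_shift (q a : ℂˣ) (k R : ℕ) : Pa q (a * q ^ 2) k R = Pa q a (k+1) R := by
  refine Finset.sum_congr rfl fun r _ => ?_
  congr 1
  rw [upow a q 2 _ _ rfl]
  congr 1
  push_cast
  ring

lemma Qa_shift (q a : ℂˣ) (k R : ℕ) : Qa q (a * q ^ 2) k R = Qa q a (k+1) R := by
  refine Finset.sum_congr rfl fun r _ => ?_
  congr 1
  rw [upow a q 2 _ _ rfl]
  congr 2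
  push_cast
  ring

-- L4 : peeling the top A from Pa at level k+1
lemma Pa_succ (q a : ℂˣ) (k R : ℕ) :
    Pa q a (k+1) (R+1) = A q (a * q ^ (2 * (k : ℤ) + 1)) + Pa q a k R := by
  unfold Pa
  push_cast
  rw [Finset.sum_range_succ' (fun r => A q (a * q ^ (2 * ((k:ℤ)+1) + 1 - 2 * ((r : ℤ) + 1)))) R]
  rw [add_comm]
  congr 1
  · congr 2; push_cast; ring
  · refine Finset.sum_congr rfl fun r _ => ?_
    congr 2; push_cast; ring

lemma Qa_succ (q a : ℂˣ) (k R : ℕ) :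
    Qa q a (k+1) (R+1) = A q (-(a * q ^ (2 * (k : ℤ) + 2))) + Qa q a k R := by
  unfold Qa
  push_cast
  rw [Finset.sum_range_succ' (fun r => A q (-(a * q ^ (2 * ((k:ℤ)+1) + 2 - 2 * ((r : ℤ) + 1))))) R]
  rw [add_comm]
  congr 1
  · congr 3; push_cast; ring
  · refine Finset.sum_congr rfl fun r _ => ?_
    congr 3; push_cast; ring

-- L6 : Pa at -(a q) is Qa
lemma Pa_neg (q a : ℂˣ) (k R : ℕ) : Pa q (-(a * q)) k R = Qa q a k R := by
  refine Finset.sum_congr rfl fun r _ => ?_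
  congr 1
  rw [neg_mul, mul_assoc, ← zpow_one_add q]
  congr 2
  ring

-- L7 : Qa at -(a q) is Pa at level k+1
lemma Qa_neg (q a : ℂˣ) (k R : ℕ) : Qa q (-(a * q)) k R = Pa q a (k+1) R := by
  refine Finset.sum_congr rfl fun r _ => ?_
  congr 1
  rw [neg_mul, neg_neg, mul_assoc, ← zpow_one_add q]
  congr 1
  push_cast
  ring

-- mKR facts
lemma mKR_succ (q a : ℂˣ) (k : ℕ) : mKR q (k+1) a = mKR q k a + Z (a * q ^ (2*k)) := by
  unfold mKR
  rw [Finset.sum_range_succ]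

lemma mKR_shift_succ (q a : ℂˣ) (k : ℕ) :
    mKR q (k+1) (a * q ^ 2) = mKR q k (a * q ^ 2) + Z (a * q ^ (2*(k+1))) := by
  unfold mKR
  rw [Finset.sum_range_succ]
  congr 2
  rw [mul_assoc, ← pow_add]
  congr 2
  omega

-- L10 : Pa q a k k in terms of mKR's
lemma Pa_full (q a : ℂˣ) (k : ℕ) :
    Pa q a k k = mKR q k a + mKR q k (a * q ^ 2) - mKR q k (-(a * q)) := by
  have h1 : Pa q a k k = ∑ r ∈ Finset.range k,
      (fun j : ℕ => A q (a * q ^ (2 * (j : ℤ) + 1))) (k - 1 - r) := by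
    refine Finset.sum_congr rfl fun r hr => ?_
    simp only [Finset.mem_range] at hr
    simp only
    congr 2
    have h : ((k - 1 - r : ℕ) : ℤ) = (k : ℤ) - 1 - r := by omega
    rw [h]; ring
  rw [h1, Finset.sum_range_reflect (fun j : ℕ => A q (a * q ^ (2 * (j : ℤ) + 1))) k]
  have h2 : ∀ j : ℕ, (fun j : ℕ => A q (a * q ^ (2 * (j : ℤ) + 1))) j
      = Z (a * q ^ 2 * q ^ (2*j)) + Z (a * q ^ (2*j)) - Z (-(a * q) * q ^ (2*j)) := by
    intro j
    simp only
    unfold A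
    congr 2
    · congr 1
      rw [mul_assoc, ← zpow_add_one, mul_assoc, ← pow_add, ← zpow_natCast q (2+2*j)]
      congr 1; push_cast; ring
    · congr 1
      rw [← zpow_neg_one q, mul_assoc, ← zpow_add, ← zpow_natCast q (2*j)]
      congr 1; push_cast; ring
    · congr 1
      rw [neg_mul, mul_assoc, ← zpow_natCast q (2*j), ← zpow_one_add q]
      congr 2; push_cast; ring
  rw [Finset.sum_congr rfl (fun j _ => h2 j)]
  rw [Finset.sum_sub_distrib, Finset.sum_add_distrib]
  unfold mKR
  abel


def W (q a : ℂˣ) (m : ℕ) (i j p r : ℕ) : LR :=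
  sgl (mKR q (m+1) a + mKR q (m+1) (a * q ^ 2) - Pa q a (m+1) i - Qa q a (m+1) j
       - Pa q a (m+1+1) p - Qa q a (m+1+1) r)

lemma W_ha (q a : ℂˣ) (m : ℕ) : ∀ i j p r,
    W q a m i j (p+1) (r+1) = W q a m p r (i+1) (j+1) := by
  intro i j p r
  unfold W
  rw [Pa_succ q a (m+1) p, Qa_succ q a (m+1) r, Pa_succ q a (m+1) i, Qa_succ q a (m+1) j]
  congr 1
  abel

lemma W_hb (q a : ℂˣ) (m : ℕ) : ∀ i j p,
    W q a m i j (p+1) 0 = W q a m p j (i+1) 0 := by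
  intro i j p
  unfold W
  rw [Pa_succ q a (m+1) p, Pa_succ q a (m+1) i]
  congr 1
  abel

lemma FKR_eq (q : ℂˣ) (k : ℕ) (a : ℂˣ) :
    FKR q k a = ∑ R ∈ Finset.range (k+1), ∑ R' ∈ Finset.range (R+1),
      sgl (mKR q k a - Pa q a k R - Qa q a k R') := rfl

lemma hL (q a : ℂˣ) (m : ℕ) :
    FKR q (m+1) a * FKR q (m+1) (a * q ^ 2)
      = ∑ i ∈ Finset.range (m+1+1), ∑ j ∈ Finset.range (i+1),
          ∑ p ∈ Finset.range (m+1+1), ∑ r ∈ Finset.range (p+1), W q a m i j p r := by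
  rw [FKR_eq q (m+1) a, FKR_eq q (m+1) (a * q ^ 2)]
  simp only [Finset.sum_mul, Finset.mul_sum]
  refine Eq.trans (Finset.sum_congr rfl fun i _ => Finset.sum_congr rfl fun j _ =>
    Finset.sum_congr rfl fun p _ => Finset.sum_congr rfl fun r _ => ?_)
    (quad_comm (fun i j p r => W q a m p r i j) (m+1+1) (m+1+1))
  rw [sgl_mul, Pa_shift q a (m+1) i, Qa_shift q a (m+1) j]
  unfold W
  congr 1
  abel

lemma hR1 (q a : ℂˣ) (m : ℕ) :
    FKR q (m+1+1) a * FKR q m (a * q ^ 2)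
      = ∑ p ∈ Finset.range (m+1+2), ∑ r ∈ Finset.range (p+1),
          ∑ i ∈ Finset.range (m+1), ∑ j ∈ Finset.range (i+1), W q a m i j p r := by
  rw [FKR_eq q (m+1+1) a, FKR_eq q m (a * q ^ 2)]
  simp only [Finset.sum_mul, Finset.mul_sum]
  refine Eq.trans (Finset.sum_congr rfl fun i _ => Finset.sum_congr rfl fun j _ =>
    Finset.sum_congr rfl fun p _ => Finset.sum_congr rfl fun r _ => ?_)
    (quad_comm (fun i j p r => W q a m i j p r) (m+1) (m+1+2))
  rw [sgl_mul, Pa_shift q a m i, Qa_shift q a m j]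
  unfold W
  rw [mKR_succ q a (m+1), mKR_shift_succ q a m]
  congr 1
  abel

lemma hR2 (q a : ℂˣ) (m : ℕ) :
    FKR q (m+1) (-(a * q))
      = ∑ t ∈ Finset.range (m+1+1), ∑ t' ∈ Finset.range (t+1), W q a m (m+1) t t' 0 := by
  rw [FKR_eq q (m+1) (-(a * q))]
  refine Finset.sum_congr rfl fun t _ => ?_
  refine Finset.sum_congr rfl fun t' _ => ?_
  rw [Pa_neg q a (m+1) t, Qa_neg q a (m+1) t']
  unfold W
  rw [Qa_zero, Pa_full q a (m+1)]
  congr 1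
  abel

end TT

open TT in
/-- The twisted T-system of type `A₂⁽²⁾`:
`F_k(a) F_k(aq²) = F_{k+1}(a) F_{k-1}(aq²) + F_k(-aq)`. -/
theorem twisted_T_system_A2_2 (q : ℂˣ) (hq : ∀ n : ℕ, 0 < n → (q : ℂ) ^ n ≠ 1)
    (a : ℂˣ) (k : ℕ) (hk : 1 ≤ k) :
    FKR q k a * FKR q k (a * q ^ 2) =
      FKR q (k + 1) a * FKR q (k - 1) (a * q ^ 2) + FKR q k (-(a * q)) := by
  obtain ⟨m, rfl⟩ : ∃ m, k = m + 1 := ⟨k - 1, by omega⟩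
  simp only [Nat.add_sub_cancel]
  rw [hL q a m, hR1 q a m, hR2 q a m]
  exact comb (W q a m) (m+1) (W_ha q a m) (W_hb q a m)
end
end

section
/- For every a ∈ ℂ∖{0}, every integer k ≥ 1, and every pair of integers (R,R') with 0 ≤ R' ≤ R ≤ k and (R,R') ≠ (0,0), the monomial m_{k,a}·(∏_{r=1}^{R} A_{aq^{2k+1−2r}}^{-1})·(∏_{r'=1}^{R'} A_{−aq^{2k+2−2r'}}^{-1}) is not dominant (it has a strictly negative exponent at some variable). Consequently m_{k,a} is the unique dominant monomial occurring in F_k(a), and it occurs with coefficient 1 (the Kirillov–Reshetikhin modules of the twisted quantum loop algebra of type A_2^{(2)} are special). -/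
noncomputable section

section aux
variable {q : ℂˣ} (hq : ∀ n : ℕ, 0 < n → (q : ℂ) ^ n ≠ 1)

lemma Z_apply (c b : ℂˣ) : Z c b = if c = b then 1 else 0 := Finsupp.single_apply

lemma A_apply (c b : ℂˣ) : A q c b =
    (if c * q = b then 1 else 0) + (if c * q⁻¹ = b then 1 else 0)
      - (if -c = b then 1 else 0) := by
  simp [A, Z_apply]

lemma mul_q (a : ℂˣ) (e : ℤ) : a * q ^ e * q = a * q ^ (e + 1) := by
  rw [mul_assoc, ← zpow_add_one]

lemma mul_qinv (a : ℂˣ) (e : ℤ) : a * q ^ e * q⁻¹ = a * q ^ (e - 1) := by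
  rw [mul_assoc, ← zpow_sub_one]

lemma mKR_nonneg (k : ℕ) (a b : ℂˣ) : 0 ≤ mKR q k a b := by
  rw [mKR, Finsupp.finset_sum_apply]
  exact Finset.sum_nonneg fun s _ => by rw [Z_apply]; split_ifs <;> omega

include hq

lemma aux_zpow_eq_one {i : ℤ} (h : q ^ i = 1) : i = 0 := by
  by_contra hi
  have hn : 0 < i.natAbs := Int.natAbs_pos.mpr hi
  apply hq i.natAbs hn
  have h2 : q ^ (i.natAbs : ℤ) = 1 := by
    rcases Int.natAbs_eq i with h1 | h1
    · rw [← h1, h]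
    · have h3 : (i.natAbs : ℤ) = -i := by omega
      rw [h3, zpow_neg, h, inv_one]
  rw [zpow_natCast] at h2
  have := congrArg Units.val h2
  push_cast at this
  exact this

lemma aux_zpow_inj {i j : ℤ} (h : q ^ i = q ^ j) : i = j := by
  have h1 : q ^ (i - j) = 1 := by rw [zpow_sub, h]; exact mul_inv_cancel _
  have := aux_zpow_eq_one hq h1
  omega

lemma aux_ne_neg (a : ℂˣ) (i j : ℤ) : a * q ^ i ≠ -(a * q ^ j) := by
  intro h
  rw [← mul_neg] at h
  have h2 : q ^ i = -(q ^ j) := mul_left_cancel h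
  have h3 : (q ^ i) ^ 2 = (q ^ j) ^ 2 := by rw [h2, neg_sq]
  have h4 : q ^ (i * 2) = q ^ (j * 2) := by
    rw [← zpow_natCast (q ^ i) 2, ← zpow_natCast (q ^ j) 2, ← zpow_mul, ← zpow_mul] at h3
    exact_mod_cast h3
  have h5 : i = j := by have := aux_zpow_inj hq h4; omega
  rw [h5] at h2
  have h6 := congrArg Units.val h2
  push_cast at h6
  have hqj : ((q : ℂ)) ^ j ≠ 0 := zpow_ne_zero _ (Units.ne_zero q)
  have : ((q : ℂ)) ^ j = 0 := by linear_combination h6 / 2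
  exact hqj this

lemma aux_neg_ne (a : ℂˣ) (i j : ℤ) : -(a * q ^ i) ≠ a * q ^ j :=
  fun h => aux_ne_neg hq a j i h.symm

lemma aux_eq_iff (a : ℂˣ) (i j : ℤ) : a * q ^ i = a * q ^ j ↔ i = j :=
  ⟨fun h => aux_zpow_inj hq (mul_left_cancel h), fun h => by rw [h]⟩

lemma aux_neg_eq_iff (a : ℂˣ) (i j : ℤ) : -(a * q ^ i) = -(a * q ^ j) ↔ i = j := by
  rw [neg_inj, aux_eq_iff hq]

lemma key_neg (a : ℂˣ) (k : ℕ) (R R' : ℕ) (hR' : R' ≤ R) (hR : R ≤ k)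
    (h : ¬(R = 0 ∧ R' = 0)) :
    ∃ b : ℂˣ,
      (mKR q k a
        - ∑ r ∈ Finset.range R, A q (a * q ^ (2 * (k : ℤ) + 1 - 2 * ((r : ℤ) + 1)))
        - ∑ r' ∈ Finset.range R',
            A q (-(a * q ^ (2 * (k : ℤ) + 2 - 2 * ((r' : ℤ) + 1))))) b < 0 := by
  rcases Nat.eq_zero_or_pos R' with h0 | hpos
  · -- R' = 0, so R ≥ 1; witness b = a * q ^ (2k)
    subst h0
    have hR1 : 0 < R := by omega
    refine ⟨a * q ^ (2 * (k : ℤ)), ?_⟩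
    rw [Finsupp.sub_apply, Finsupp.sub_apply]
    have e1 : mKR q k a (a * q ^ (2 * (k : ℤ))) = 0 := by
      rw [mKR, Finsupp.finset_sum_apply]
      apply Finset.sum_eq_zero
      intro s hs
      rw [Finset.mem_range] at hs
      rw [Z_apply, ← zpow_natCast q (2 * s), if_neg]
      rw [aux_eq_iff hq]
      omega
    have e2 : (∑ r ∈ Finset.range R,
        A q (a * q ^ (2 * (k : ℤ) + 1 - 2 * ((r : ℤ) + 1)))) (a * q ^ (2 * (k : ℤ))) = 1 := by
      rw [Finsupp.finset_sum_apply]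
      have hterm : ∀ r ∈ Finset.range R,
          (A q (a * q ^ (2 * (k : ℤ) + 1 - 2 * ((r : ℤ) + 1)))) (a * q ^ (2 * (k : ℤ)))
            = if r = 0 then 1 else 0 := by
        intro r hr
        rw [A_apply, mul_q, mul_qinv,
          if_neg (aux_neg_ne hq a _ _)]
        simp only [aux_eq_iff hq]
        split_ifs <;> omega
      rw [Finset.sum_congr rfl hterm, Finset.sum_ite_eq' (Finset.range R) 0 (fun _ => (1:ℤ)),
        if_pos (Finset.mem_range.mpr hR1)]
    rw [e1, e2]
    simp
  · -- R' ≥ 1; witness b = -(a * q ^ (2k+1))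
    refine ⟨-(a * q ^ (2 * (k : ℤ) + 1)), ?_⟩
    rw [Finsupp.sub_apply, Finsupp.sub_apply]
    have e1 : mKR q k a (-(a * q ^ (2 * (k : ℤ) + 1))) = 0 := by
      rw [mKR, Finsupp.finset_sum_apply]
      apply Finset.sum_eq_zero
      intro s hs
      rw [Z_apply, ← zpow_natCast q (2 * s), if_neg (aux_ne_neg hq a _ _)]
    have e2 : (∑ r ∈ Finset.range R,
        A q (a * q ^ (2 * (k : ℤ) + 1 - 2 * ((r : ℤ) + 1)))) (-(a * q ^ (2 * (k : ℤ) + 1))) = 0 := by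
      rw [Finsupp.finset_sum_apply]
      apply Finset.sum_eq_zero
      intro r hr
      rw [A_apply, mul_q, mul_qinv,
        if_neg (aux_ne_neg hq a _ _), if_neg (aux_ne_neg hq a _ _), if_neg]
      · ring
      · rw [aux_neg_eq_iff hq]
        omega
    have e3 : (∑ r' ∈ Finset.range R',
        A q (-(a * q ^ (2 * (k : ℤ) + 2 - 2 * ((r' : ℤ) + 1)))))
          (-(a * q ^ (2 * (k : ℤ) + 1))) = 1 := by
      rw [Finsupp.finset_sum_apply]
      have hterm : ∀ r' ∈ Finset.range R',
          (A q (-(a * q ^ (2 * (k : ℤ) + 2 - 2 * ((r' : ℤ) + 1)))))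
            (-(a * q ^ (2 * (k : ℤ) + 1))) = if r' = 0 then 1 else 0 := by
        intro r' hr'
        rw [A_apply, neg_mul, neg_mul, mul_q, mul_qinv, neg_neg,
          if_neg (aux_ne_neg hq a _ _)]
        simp only [aux_neg_eq_iff hq]
        split_ifs <;> omega
      rw [Finset.sum_congr rfl hterm, Finset.sum_ite_eq' (Finset.range R') 0 (fun _ => (1:ℤ)),
        if_pos (Finset.mem_range.mpr hpos)]
    rw [e1, e2, e3]
    simp

end aux

/-- The Kirillov–Reshetikhin modules of the twisted quantum loop algebra of type `A₂⁽²⁾`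
are special: every monomial `m_{k,a} ∏ A⁻¹` with `(R,R') ≠ (0,0)` has a strictly negative
exponent at some variable, so `m_{k,a}` is the unique dominant monomial of `F_k(a)`
and it occurs with coefficient `1`. -/
theorem KR_special_A2_2 (q : ℂˣ) (hq : ∀ n : ℕ, 0 < n → (q : ℂ) ^ n ≠ 1)
    (a : ℂˣ) (k : ℕ) (hk : 1 ≤ k) :
    (∀ R R' : ℕ, R' ≤ R → R ≤ k → ¬(R = 0 ∧ R' = 0) →
      ∃ b : ℂˣ,
        (mKR q k a
          - ∑ r ∈ Finset.range R, A q (a * q ^ (2 * (k : ℤ) + 1 - 2 * ((r : ℤ) + 1)))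
          - ∑ r' ∈ Finset.range R',
              A q (-(a * q ^ (2 * (k : ℤ) + 2 - 2 * ((r' : ℤ) + 1))))) b < 0)
    ∧ (∀ m : Mon, (FKR q k a).coeff m ≠ 0 → (∀ b : ℂˣ, 0 ≤ m b) → m = mKR q k a)
    ∧ (FKR q k a).coeff (mKR q k a) = 1 := by
  have hMne : ∀ R R' : ℕ, R' ≤ R → R ≤ k → ¬(R = 0 ∧ R' = 0) →
      (mKR q k a
        - ∑ r ∈ Finset.range R, A q (a * q ^ (2 * (k : ℤ) + 1 - 2 * ((r : ℤ) + 1)))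
        - ∑ r' ∈ Finset.range R',
            A q (-(a * q ^ (2 * (k : ℤ) + 2 - 2 * ((r' : ℤ) + 1))))) ≠ mKR q k a := by
    intro R R' hR' hR h he
    obtain ⟨b, hb⟩ := key_neg hq a k R R' hR' hR h
    rw [he] at hb
    exact absurd hb (not_lt.mpr (mKR_nonneg k a b))
  refine ⟨fun R R' hR' hR h => key_neg hq a k R R' hR' hR h, ?_, ?_⟩
  · intro m hm hpos
    rw [FKR, AddMonoidAlgebra.coeff_sum, Finsupp.finset_sum_apply] at hm
    obtain ⟨R, hRmem, h2⟩ := Finset.exists_ne_zero_of_sum_ne_zero hm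
    rw [AddMonoidAlgebra.coeff_sum, Finsupp.finset_sum_apply] at h2
    obtain ⟨R', hR'mem, h3⟩ := Finset.exists_ne_zero_of_sum_ne_zero h2
    rw [Finset.mem_range] at hRmem hR'mem
    have hMm : (mKR q k a
        - ∑ r ∈ Finset.range R, A q (a * q ^ (2 * (k : ℤ) + 1 - 2 * ((r : ℤ) + 1)))
        - ∑ r' ∈ Finset.range R',
            A q (-(a * q ^ (2 * (k : ℤ) + 2 - 2 * ((r' : ℤ) + 1))))) = m := by
      by_contra hne
      exact h3 (Finsupp.single_eq_of_ne' hne)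
    by_cases hc : R = 0 ∧ R' = 0
    · obtain ⟨rfl, rfl⟩ := hc
      simp only [Finset.range_zero, Finset.sum_empty, sub_zero] at hMm
      exact hMm.symm
    · exfalso
      obtain ⟨b, hb⟩ := key_neg hq a k R R' (by omega) (by omega) hc
      rw [hMm] at hb
      exact absurd (hpos b) (not_le.mpr hb)
  · rw [FKR, AddMonoidAlgebra.coeff_sum, Finsupp.finset_sum_apply]
    rw [Finset.sum_eq_single_of_mem 0 (Finset.mem_range.mpr (by omega))]
    · simp only [zero_add, Finset.sum_range_one, Finset.range_zero, Finset.sum_empty, sub_zero]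
      exact Finsupp.single_eq_same
    · intro R hRmem hR0
      rw [Finset.mem_range] at hRmem
      rw [AddMonoidAlgebra.coeff_sum, Finsupp.finset_sum_apply]
      apply Finset.sum_eq_zero
      intro R' hR'mem
      rw [Finset.mem_range] at hR'mem
      exact Finsupp.single_eq_of_ne' (hMne R R' (by omega) (by omega) (by omega))
end
end

section
/- Let K ⊆ R be the subring generated by the elements F_1(b) = Z_b + Z_{−bq}Z_{bq²}^{-1} + Z_{−bq³}^{-1} for all b ∈ ℂ∖{0} (the twisted q-characters of the fundamental representations of the twisted quantum loop algebra of type A_2^{(2)}). Then every nonzero element of K has at least one dominant monomial in its support, i.e. some monomial m with nonzero coefficient satisfying z_a(m) ≥ 0 for all a ∈ ℂ∖{0}. -/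
noncomputable section

/-- The twisted q-character of the fundamental representation:
`F₁(b) = Z_b + Z_{-bq} Z_{bq²}⁻¹ + Z_{-bq³}⁻¹`. -/
def F1 (q b : ℂˣ) : LR :=
  AddMonoidAlgebra.single (Z b) 1
    + AddMonoidAlgebra.single (Z (-(b * q)) - Z (b * q ^ 2)) 1
    + AddMonoidAlgebra.single (-Z (-(b * q ^ 3))) 1

/-- The subring `K ⊆ R` generated by the twisted q-characters of the fundamental
representations of the twisted quantum loop algebra of type `A₂⁽²⁾`. -/
def Ksub (q : ℂˣ) : Subring LR := Subring.closure (Set.range fun b : ℂˣ => F1 q b)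

/-- total degree -/
def deg : Mon →+ ℤ := Finsupp.liftAddHom fun _ => AddMonoidHom.id ℤ

lemma deg_Z (a : ℂˣ) : deg (Z a) = 1 := by
  simp [deg, Z]

def Phi (q : ℂˣ) (T : Multiset ℂˣ) : LR := (T.map (F1 q)).prod
def monT (T : Multiset ℂˣ) : Mon := (T.map Z).sum

lemma monT_apply (T : Multiset ℂˣ) (a : ℂˣ) : monT T a = T.count a := by
  induction T using Multiset.induction_on with
  | empty => simp [monT]
  | cons b T ih =>
    simp only [monT, Multiset.map_cons, Multiset.sum_cons, Finsupp.add_apply] at *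
    rw [ih, Multiset.count_cons, Z, Finsupp.single_apply]
    by_cases h : a = b <;> simp [h, eq_comm, add_comm]

lemma deg_monT (T : Multiset ℂˣ) : deg (monT T) = T.card := by
  induction T using Multiset.induction_on with
  | empty => simp [monT]
  | cons b T ih =>
    simp only [monT, Multiset.map_cons, Multiset.sum_cons, map_add, deg_Z] at *
    rw [ih, Multiset.card_cons]; push_cast; ring

lemma monT_inj {T T' : Multiset ℂˣ} (h : monT T = monT T') : T = T' := by
  ext a
  have := congrArg (fun m : Mon => m a) h
  simpa [monT_apply] using this

lemma PhiA (q : ℂˣ) (T : Multiset ℂˣ) : ∀ m : Mon, (T.card : ℤ) ≤ deg m →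
    (Phi q T).coeff m = if m = monT T then 1 else 0 := by
  induction T using Multiset.induction_on with
  | empty =>
    intro m hm
    rw [Phi, Multiset.map_zero, Multiset.prod_zero, AddMonoidAlgebra.one_def, monT]
    simp [Finsupp.single_apply, eq_comm]
    exact if_congr Iff.rfl rfl rfl
  | cons b T ih =>
    intro m hm
    have hPhi : Phi q (b ::ₘ T) = F1 q b * Phi q T := by
      rw [Phi, Multiset.map_cons, Multiset.prod_cons]; rfl
    rw [hPhi, F1, add_mul, add_mul, AddMonoidAlgebra.coeff_add, AddMonoidAlgebra.coeff_add,
      Finsupp.add_apply, Finsupp.add_apply,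
      AddMonoidAlgebra.coeff_single_mul_apply, AddMonoidAlgebra.coeff_single_mul_apply,
      AddMonoidAlgebra.coeff_single_mul_apply]
    simp only [one_mul]
    have hcard : (T.card : ℤ) + 1 ≤ deg m := by
      rw [Multiset.card_cons] at hm; push_cast at hm; linarith
    have h2 : (Phi q T).coeff (-(Z (-(b * q)) - Z (b * q ^ 2)) + m) = 0 := by
      rw [ih _ (by simp only [map_add, map_neg, map_sub, deg_Z]; linarith)]
      rw [if_neg]
      intro he
      have := congrArg deg he
      simp only [map_add, map_neg, map_sub, deg_Z, deg_monT] at this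
      omega
    have h3 : (Phi q T).coeff (- -Z (-(b * q ^ 3)) + m) = 0 := by
      rw [ih _ (by simp only [map_add, map_neg, deg_Z]; linarith)]
      rw [if_neg]
      intro he
      have := congrArg deg he
      simp only [map_add, map_neg, deg_Z, deg_monT] at this
      omega
    rw [h2, h3, add_zero, add_zero]
    rw [ih _ (by simp only [map_add, map_neg, deg_Z]; linarith)]
    have hmonT : monT (b ::ₘ T) = Z b + monT T := by
      rw [monT, Multiset.map_cons, Multiset.sum_cons]; rfl
    rw [hmonT]
    congr 1
    rw [eq_iff_iff]
    constructor
    · intro h; rw [← h]; abel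
    · intro h; rw [h]; abel

lemma Phi_surj (q : ℂˣ) (u : LR) (hu : u ∈ Submonoid.closure (Set.range fun b : ℂˣ => F1 q b)) :
    ∃ T : Multiset ℂˣ, Phi q T = u := by
  induction hu using Submonoid.closure_induction with
  | mem y hy =>
    obtain ⟨b, rfl⟩ := hy
    exact ⟨{b}, by simp [Phi]⟩
  | one => exact ⟨0, by simp [Phi]⟩
  | mul a b _ _ ha hb =>
    obtain ⟨T1, rfl⟩ := ha
    obtain ⟨T2, rfl⟩ := hb
    exact ⟨T1 + T2, by rw [Phi, Phi, Phi, Multiset.map_add, Multiset.prod_add]⟩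


/-- Every nonzero element of the subring generated by the `F₁(b)` has at least one
dominant monomial in its support. -/
theorem dominant_monomial_exists (q : ℂˣ) (hq : ∀ n : ℕ, 0 < n → (q : ℂ) ^ n ≠ 1)
    (x : LR) (hx : x ∈ Ksub q) (hx0 : x ≠ 0) :
    ∃ m : Mon, x.coeff m ≠ 0 ∧ ∀ b : ℂˣ, 0 ≤ m b := by
  classical
  rw [Ksub, Subring.mem_closure_iff] at hx
  rw [← Submodule.span_int_eq_addSubgroupClosure, Submodule.mem_toAddSubgroup] at hx
  obtain ⟨c, hcsupp, hcsum⟩ := Submodule.mem_span_set.mp hx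
  have hc0 : c ≠ 0 := by
    rintro rfl; exact hx0 (by simpa using hcsum.symm)
  have hT : ∀ u : LR, ∃ T : Multiset ℂˣ,
      u ∈ Submonoid.closure (Set.range fun b : ℂˣ => F1 q b) → Phi q T = u := by
    intro u
    by_cases hu : u ∈ Submonoid.closure (Set.range fun b : ℂˣ => F1 q b)
    · obtain ⟨T, hT⟩ := Phi_surj q u hu; exact ⟨T, fun _ => hT⟩
    · exact ⟨0, fun h => absurd h hu⟩
  choose T hTeq using hT
  have hsuppT : ∀ u ∈ c.support, Phi q (T u) = u := fun u hu => hTeq u (hcsupp hu)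
  have hne : c.support.Nonempty := Finsupp.support_nonempty_iff.mpr hc0
  obtain ⟨u₀, hu₀, hmax⟩ := c.support.exists_max_image (fun u => (T u).card) hne
  set m₀ : Mon := monT (T u₀) with hm₀
  refine ⟨m₀, ?_, ?_⟩
  · have hxm : x.coeff m₀ = ∑ u ∈ c.support, c u * u.coeff m₀ := by
      rw [← hcsum, Finsupp.sum, AddMonoidAlgebra.coeff_sum, Finsupp.finset_sum_apply]
      refine Finset.sum_congr rfl fun u hu => ?_
      rw [AddMonoidAlgebra.coeff_smul, Finsupp.smul_apply, smul_eq_mul]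
    have hval : ∀ u ∈ c.support, u.coeff m₀ = if u = u₀ then 1 else 0 := by
      intro u hu
      have key : (Phi q (T u)).coeff m₀ = if m₀ = monT (T u) then 1 else 0 :=
        PhiA q (T u) m₀ (by rw [hm₀, deg_monT]; exact_mod_cast hmax u hu)
      have hiff : (m₀ = monT (T u)) ↔ (u = u₀) := by
        constructor
        · intro h
          have h2 : T u₀ = T u := monT_inj (hm₀ ▸ h)
          calc u = Phi q (T u) := (hsuppT u hu).symm
            _ = Phi q (T u₀) := by rw [h2]
            _ = u₀ := hsuppT u₀ hu₀
        · intro h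
          rw [h]
      calc u.coeff m₀ = (Phi q (T u)).coeff m₀ := by rw [hsuppT u hu]
        _ = if m₀ = monT (T u) then 1 else 0 := key
        _ = if u = u₀ then 1 else 0 := by rw [if_congr hiff rfl rfl]
    rw [hxm, Finset.sum_congr rfl (fun u hu => by rw [hval u hu])]
    simp only [mul_ite, mul_one, mul_zero]
    rw [Finset.sum_ite_eq' c.support u₀ (fun u => c u), if_pos hu₀]
    exact Finsupp.mem_support_iff.mp hu₀
  · intro b
    rw [hm₀, monT_apply]
    exact_mod_cast Nat.zero_le _
end
end

section
/- For every a ∈ ℂ∖{0} and every integer k ≥ 0, the element F_k(a) lies in the subring K of R generated by the elements F_1(b) = Z_b + Z_{−bq}Z_{bq²}^{-1} + Z_{−bq³}^{-1}, b ∈ ℂ∖{0}. (The twisted q-character of each Kirillov–Reshetikhin module of type A_2^{(2)} is a polynomial with integer coefficients in the twisted q-characters of the fundamental representations.) -/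
noncomputable section

/-! ### Auxiliary material -/

section Abstract
variable {S : Type*} [CommRing S] (x y : ℕ → S)

/-- `U(off,n) = ∑_{R=0}^{n} ∏_{i<R} y_{off+i}`. -/
def Uu (y : ℕ → S) (off n : ℕ) : S :=
  ∑ R ∈ Finset.range (n+1), ∏ i ∈ Finset.range R, y (off+i)

/-- `T(off,n) = ∑_{R=0}^{n} (∏_{i<R} x_{off+i}) · U(off,R)`. -/
def Tt (x y : ℕ → S) (off n : ℕ) : S :=
  ∑ R ∈ Finset.range (n+1), (∏ i ∈ Finset.range R, x (off+i)) * Uu y off R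

lemma Pp_succ (off n : ℕ) :
    (∏ i ∈ Finset.range (n+1), x (off+i)) = x off * ∏ i ∈ Finset.range n, x ((off+1)+i) := by
  rw [Finset.prod_range_succ', add_zero, mul_comm]
  congr 1
  exact Finset.prod_congr rfl fun i _ => by rw [show off + (i+1) = (off+1)+i by omega]

lemma Uu_succ (off n : ℕ) : Uu y off (n+1) = 1 + y off * Uu y (off+1) n := by
  unfold Uu
  rw [Finset.sum_range_succ', Finset.prod_range_zero,
    Finset.sum_congr rfl fun i _ => Pp_succ y off i, ← Finset.mul_sum]
  ring

lemma Tt_succ (off n : ℕ) :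
    Tt x y off (n+1) = Tt x y off n + (∏ i ∈ Finset.range (n+1), x (off+i)) * Uu y off (n+1) := by
  unfold Tt
  rw [Finset.sum_range_succ]

lemma key1 : (1 + x 0 + x 0 * y 0) * Tt x y 1 1
    = Tt x y 0 2 + x 1 * (1 + y 1 + y 1 * x 0) * Tt x y 2 0 := by
  simp [Tt, Uu, Finset.sum_range_succ, Finset.prod_range_succ]
  ring

lemma key_gen (n : ℕ) :
    (1 + x 0 + x 0 * y 0) * Tt x y 1 (n+2)
      = Tt x y 0 (n+3) + x 1 * (1 + y 1 + y 1 * x 0) * Tt x y 2 (n+1)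
        - x 1 * x 2 * y 2 * Tt x y 3 n := by
  induction n with
  | zero =>
      simp [Tt, Uu, Finset.sum_range_succ, Finset.prod_range_succ]
      ring
  | succ n ih =>
      rw [show n+1+2 = (n+2)+1 by omega, show n+1+3 = (n+3)+1 by omega,
        show n+1+1 = (n+1)+1 by omega]
      rw [Tt_succ x y 1 (n+2), Tt_succ x y 0 (n+3), Tt_succ x y 2 (n+1), Tt_succ x y 3 n]
      rw [Pp_succ x 0 (n+3), Pp_succ x 1 (n+2), Pp_succ x 2 (n+1)]
      rw [Uu_succ y 0 (n+3), Uu_succ y 1 (n+2), Uu_succ y 2 (n+1)]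
      simp only [zero_add, show (1:ℕ)+1 = 2 from rfl, show (2:ℕ)+1 = 3 from rfl]
      linear_combination ih

end Abstract

/-! `sng` basics -/

def sng (m : Mon) : LR := AddMonoidAlgebra.single m 1

lemma sng_mul (m m' : Mon) : sng m * sng m' = sng (m + m') := by
  simp [sng, AddMonoidAlgebra.single_mul_single]

lemma sng_zero : sng 0 = 1 := rfl

lemma sng_sum_neg (n : ℕ) (f : ℕ → Mon) :
    sng (-(∑ i ∈ Finset.range n, f i)) = ∏ i ∈ Finset.range n, sng (-(f i)) := by
  induction n with
  | zero => simp [sng_zero]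
  | succ n ih =>
      rw [Finset.sum_range_succ, Finset.prod_range_succ, ← ih, sng_mul, neg_add]

/-! unit power helpers -/

lemma upow1 (a q : ℂˣ) (e f : ℤ) (h : e + 1 = f) : (a * q^e) * q = a * q^f := by
  subst h; rw [mul_assoc, ← zpow_add_one]

lemma uinv (a q : ℂˣ) (e f : ℤ) (h : e - 1 = f) : (a * q^e) * q⁻¹ = a * q^f := by
  subst h; rw [mul_assoc, ← zpow_sub_one]

lemma upown (a q : ℂˣ) (e : ℤ) (n : ℕ) (f : ℤ) (h : e + n = f) : (a * q^e) * q^n = a * q^f := by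
  subst h; rw [mul_assoc, ← zpow_natCast q n, ← zpow_add]

lemma uneg1 (a q : ℂˣ) (e f : ℤ) (h : e + 1 = f) : (-(a * q^e)) * q = -(a * q^f) := by
  rw [neg_mul, upow1 a q e f h]

lemma uneginv (a q : ℂˣ) (e f : ℤ) (h : e - 1 = f) : (-(a * q^e)) * q⁻¹ = -(a * q^f) := by
  rw [neg_mul, uinv a q e f h]

lemma unegn (a q : ℂˣ) (e : ℤ) (n : ℕ) (f : ℤ) (h : e + n = f) :
    (-(a * q^e)) * q^n = -(a * q^f) := by
  rw [neg_mul, upown a q e n f h]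

lemma znat (a q : ℂˣ) (m : ℕ) (e : ℤ) (h : (m:ℤ) = e) : a * q^m = a * q^e := by
  rw [← h, zpow_natCast]

/-! generic factorization of `F1` -/

lemma F1_fact (q b : ℂˣ) :
    F1 q b = sng (Z b) * (1 + sng (-(A q (b*q))) + sng (-(A q (b*q))) * sng (-(A q (-(b*q^2))))) := by
  have h1 : Z b + -(A q (b*q)) = Z (-(b*q)) - Z (b*q^2) := by
    have e1 : b*q*q = b*q^2 := by rw [mul_assoc, ← sq]
    have e2 : b*q*q⁻¹ = b := mul_inv_cancel_right b q
    unfold A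
    rw [e1, e2]
    abel
  have h2 : Z (-(b*q)) - Z (b*q^2) + -(A q (-(b*q^2))) = -Z (-(b*q^3)) := by
    have e3 : (-(b*q^2))*q = -(b*q^3) := by
      rw [neg_mul, mul_assoc, ← pow_succ]
    have e4 : (-(b*q^2))*q⁻¹ = -(b*q) := by
      rw [neg_mul, sq, ← mul_assoc, mul_inv_cancel_right]
    have e5 : -(-(b*q^2)) = b*q^2 := neg_neg _
    unfold A
    rw [e3, e4, e5]
    abel
  unfold F1
  rw [mul_add, mul_add, mul_one, sng_mul, ← mul_assoc, sng_mul, sng_mul, h1, h2]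
  rfl

/-! `x`/`y` families and the structural form of `FKR` -/

def Xf (q a : ℂˣ) (c : ℤ) : ℕ → LR := fun r => sng (-(A q (a * q ^ (c - 2*(r:ℤ)))))
def Yf (q a : ℂˣ) (c : ℤ) : ℕ → LR := fun r => sng (-(A q (-(a * q ^ (c + 1 - 2*(r:ℤ))))))

lemma Xf_eq (q a : ℂˣ) (c : ℤ) (r : ℕ) (e : ℤ) (h : c - 2*(r:ℤ) = e) :
    Xf q a c r = sng (-(A q (a * q ^ e))) := by simp only [Xf]; rw [h]

lemma Yf_eq (q a : ℂˣ) (c : ℤ) (r : ℕ) (e : ℤ) (h : c + 1 - 2*(r:ℤ) = e) :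
    Yf q a c r = sng (-(A q (-(a * q ^ e)))) := by simp only [Yf]; rw [h]

lemma FKR_eq (q a : ℂˣ) (K off : ℕ) (x y : ℕ → LR)
    (hx : ∀ r : ℕ, x (off + r) = sng (-(A q (a * q ^ (2*(K:ℤ)+1-2*((r:ℤ)+1))))))
    (hy : ∀ r : ℕ, y (off + r) = sng (-(A q (-(a * q ^ (2*(K:ℤ)+2-2*((r:ℤ)+1))))))) :
    FKR q K a = sng (mKR q K a) * Tt x y off K := by
  unfold FKR Tt Uu
  rw [Finset.mul_sum]
  refine Finset.sum_congr rfl fun R _ => ?_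
  rw [Finset.mul_sum, Finset.mul_sum]
  refine Finset.sum_congr rfl fun R' _ => ?_
  show sng _ = _
  rw [show (mKR q K a
        - ∑ r ∈ Finset.range R, A q (a * q ^ (2 * (K : ℤ) + 1 - 2 * ((r : ℤ) + 1)))
        - ∑ r' ∈ Finset.range R', A q (-(a * q ^ (2 * (K : ℤ) + 2 - 2 * ((r' : ℤ) + 1)))))
      = mKR q K a
        + -(∑ r ∈ Finset.range R, A q (a * q ^ (2 * (K : ℤ) + 1 - 2 * ((r : ℤ) + 1))))
        + -(∑ r' ∈ Finset.range R', A q (-(a * q ^ (2 * (K : ℤ) + 2 - 2 * ((r' : ℤ) + 1)))))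
      from by abel]
  rw [← sng_mul, ← sng_mul, sng_sum_neg, sng_sum_neg, mul_assoc]
  congr 1
  exact congrArg₂ _ (Finset.prod_congr rfl fun i _ => (hx i).symm)
    (Finset.prod_congr rfl fun i _ => (hy i).symm)

lemma FKR0 (q a : ℂˣ) : FKR q 0 a = 1 := by
  simp [FKR, mKR]
  rfl

lemma FKR1 (q a : ℂˣ) : FKR q 1 a = F1 q a := by
  rw [FKR_eq q a 1 0 (Xf q a 1) (Yf q a 1)
    (fun r => Xf_eq q a 1 (0+r) _ (by push_cast; ring))
    (fun r => Yf_eq q a 1 (0+r) _ (by push_cast; ring)),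
    F1_fact]
  have hm : mKR q 1 a = Z a := by
    simp [mKR]
  rw [hm]
  have ht : Tt (Xf q a 1) (Yf q a 1) 0 1
      = 1 + Xf q a 1 0 * (1 + Yf q a 1 0) := by
    simp [Tt, Uu, Finset.sum_range_succ, Finset.prod_range_succ]
  rw [ht, Xf_eq q a 1 0 1 (by norm_num), Yf_eq q a 1 0 2 (by norm_num)]
  rw [show a * q ^ (1:ℤ) = a * q from by rw [zpow_one],
    show a * q ^ (2:ℤ) = a * q^(2:ℕ) from (znat a q 2 2 (by norm_num)).symm]
  ring

/-! The T-system identities -/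

lemma tsys1 (q a : ℂˣ) :
    F1 q (a * q ^ (2:ℤ)) * FKR q 1 a
      = FKR q 2 a + F1 q (-(a * q ^ (1:ℤ))) * FKR q 0 a := by
  have h2 := FKR_eq q a 2 0 (Xf q a 3) (Yf q a 3)
    (fun r => Xf_eq q a 3 (0+r) _ (by push_cast; ring))
    (fun r => Yf_eq q a 3 (0+r) _ (by push_cast; ring))
  have h1 := FKR_eq q a 1 1 (Xf q a 3) (Yf q a 3)
    (fun r => Xf_eq q a 3 (1+r) _ (by push_cast; ring))
    (fun r => Yf_eq q a 3 (1+r) _ (by push_cast; ring))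
  have h0 := FKR_eq q a 0 2 (Xf q a 3) (Yf q a 3)
    (fun r => Xf_eq q a 3 (2+r) _ (by push_cast; ring))
    (fun r => Yf_eq q a 3 (2+r) _ (by push_cast; ring))
  have hF1t : F1 q (a * q ^ (2:ℤ))
      = sng (Z (a * q ^ (2:ℤ))) * (1 + Xf q a 3 0 + Xf q a 3 0 * Yf q a 3 0) := by
    rw [F1_fact, upow1 a q 2 3 (by norm_num), upown a q 2 2 4 (by norm_num),
      ← Xf_eq q a 3 0 3 (by norm_num), ← Yf_eq q a 3 0 4 (by norm_num)]
  have hF1n : F1 q (-(a * q ^ (1:ℤ)))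
      = sng (Z (-(a * q ^ (1:ℤ)))) * (1 + Yf q a 3 1 + Yf q a 3 1 * Xf q a 3 0) := by
    rw [F1_fact, uneg1 a q 1 2 (by norm_num), unegn a q 1 2 3 (by norm_num), neg_neg,
      ← Xf_eq q a 3 0 3 (by norm_num), ← Yf_eq q a 3 1 2 (by norm_num)]
  have hM1 : sng (Z (a * q ^ (2:ℤ))) * sng (mKR q 1 a) = sng (mKR q 2 a) := by
    rw [sng_mul]
    congr 1
    unfold mKR
    conv_rhs => rw [Finset.sum_range_succ]
    rw [znat a q (2*1) 2 (by norm_num)]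
    abel
  have hM2 : sng (Z (-(a * q ^ (1:ℤ)))) * sng (mKR q 0 a) = sng (mKR q 2 a) * Xf q a 3 1 := by
    rw [Xf_eq q a 3 1 1 (by norm_num), sng_mul, sng_mul]
    congr 1
    have hA : A q (a * q ^ (1:ℤ)) = Z (a * q ^ (2:ℤ)) + Z (a * q ^ (0:ℤ)) - Z (-(a * q ^ (1:ℤ))) := by
      unfold A
      rw [upow1 a q 1 2 (by norm_num), uinv a q 1 0 (by norm_num)]
    have hm2 : mKR q 2 a = Z (a * q ^ (0:ℤ)) + Z (a * q ^ (2:ℤ)) := by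
      unfold mKR
      rw [Finset.sum_range_succ, Finset.sum_range_succ, Finset.sum_range_zero,
        znat a q (2*0) 0 (by norm_num), znat a q (2*1) 2 (by norm_num)]
      abel
    rw [hA, hm2]
    show Z (-(a * q ^ (1:ℤ))) + mKR q 0 a = _
    have : mKR q 0 a = 0 := rfl
    rw [this]
    abel
  rw [h2, h1, h0, hF1t, hF1n]
  linear_combination ((1 + Xf q a 3 0 + Xf q a 3 0 * Yf q a 3 0) * Tt (Xf q a 3) (Yf q a 3) 1 1) * hM1
    + sng (mKR q 2 a) * key1 (Xf q a 3) (Yf q a 3)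
    - ((1 + Yf q a 3 1 + Yf q a 3 1 * Xf q a 3 0) * Tt (Xf q a 3) (Yf q a 3) 2 0) * hM2

lemma tsys (q a : ℂˣ) (n : ℕ) :
    F1 q (a * q ^ (2*(n:ℤ)+4)) * FKR q (n+2) a
      = FKR q (n+3) a + F1 q (-(a * q ^ (2*(n:ℤ)+3))) * FKR q (n+1) a - FKR q n a := by
  have h3 := FKR_eq q a (n+3) 0 (Xf q a (2*(n:ℤ)+5)) (Yf q a (2*(n:ℤ)+5))
    (fun r => Xf_eq q a _ (0+r) _ (by push_cast; ring))
    (fun r => Yf_eq q a _ (0+r) _ (by push_cast; ring))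
  have h2 := FKR_eq q a (n+2) 1 (Xf q a (2*(n:ℤ)+5)) (Yf q a (2*(n:ℤ)+5))
    (fun r => Xf_eq q a _ (1+r) _ (by push_cast; ring))
    (fun r => Yf_eq q a _ (1+r) _ (by push_cast; ring))
  have h1 := FKR_eq q a (n+1) 2 (Xf q a (2*(n:ℤ)+5)) (Yf q a (2*(n:ℤ)+5))
    (fun r => Xf_eq q a _ (2+r) _ (by push_cast; ring))
    (fun r => Yf_eq q a _ (2+r) _ (by push_cast; ring))
  have h0 := FKR_eq q a n 3 (Xf q a (2*(n:ℤ)+5)) (Yf q a (2*(n:ℤ)+5))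
    (fun r => Xf_eq q a _ (3+r) _ (by push_cast; ring))
    (fun r => Yf_eq q a _ (3+r) _ (by push_cast; ring))
  have hF1t : F1 q (a * q ^ (2*(n:ℤ)+4))
      = sng (Z (a * q ^ (2*(n:ℤ)+4)))
        * (1 + Xf q a (2*(n:ℤ)+5) 0 + Xf q a (2*(n:ℤ)+5) 0 * Yf q a (2*(n:ℤ)+5) 0) := by
    rw [F1_fact, upow1 a q (2*(n:ℤ)+4) (2*(n:ℤ)+5) (by ring),
      upown a q (2*(n:ℤ)+4) 2 (2*(n:ℤ)+6) (by push_cast; ring),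
      ← Xf_eq q a (2*(n:ℤ)+5) 0 (2*(n:ℤ)+5) (by push_cast; ring),
      ← Yf_eq q a (2*(n:ℤ)+5) 0 (2*(n:ℤ)+6) (by push_cast; ring)]
  have hF1n : F1 q (-(a * q ^ (2*(n:ℤ)+3)))
      = sng (Z (-(a * q ^ (2*(n:ℤ)+3))))
        * (1 + Yf q a (2*(n:ℤ)+5) 1 + Yf q a (2*(n:ℤ)+5) 1 * Xf q a (2*(n:ℤ)+5) 0) := by
    rw [F1_fact, uneg1 a q (2*(n:ℤ)+3) (2*(n:ℤ)+4) (by ring),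
      unegn a q (2*(n:ℤ)+3) 2 (2*(n:ℤ)+5) (by push_cast; ring), neg_neg,
      ← Xf_eq q a (2*(n:ℤ)+5) 0 (2*(n:ℤ)+5) (by push_cast; ring),
      ← Yf_eq q a (2*(n:ℤ)+5) 1 (2*(n:ℤ)+4) (by push_cast; ring)]
  have hA1 : A q (a * q ^ (2*(n:ℤ)+3))
      = Z (a * q ^ (2*(n:ℤ)+4)) + Z (a * q ^ (2*(n:ℤ)+2)) - Z (-(a * q ^ (2*(n:ℤ)+3))) := by
    unfold A
    rw [upow1 a q (2*(n:ℤ)+3) (2*(n:ℤ)+4) (by ring), uinv a q (2*(n:ℤ)+3) (2*(n:ℤ)+2) (by ring)]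
  have hA2 : A q (a * q ^ (2*(n:ℤ)+1))
      = Z (a * q ^ (2*(n:ℤ)+2)) + Z (a * q ^ (2*(n:ℤ))) - Z (-(a * q ^ (2*(n:ℤ)+1))) := by
    unfold A
    rw [upow1 a q (2*(n:ℤ)+1) (2*(n:ℤ)+2) (by ring), uinv a q (2*(n:ℤ)+1) (2*(n:ℤ)) (by ring)]
  have hA3 : A q (-(a * q ^ (2*(n:ℤ)+2)))
      = Z (-(a * q ^ (2*(n:ℤ)+3))) + Z (-(a * q ^ (2*(n:ℤ)+1))) - Z (a * q ^ (2*(n:ℤ)+2)) := by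
    unfold A
    rw [uneg1 a q (2*(n:ℤ)+2) (2*(n:ℤ)+3) (by ring), uneginv a q (2*(n:ℤ)+2) (2*(n:ℤ)+1) (by ring),
      neg_neg]
  have hM1 : sng (Z (a * q ^ (2*(n:ℤ)+4))) * sng (mKR q (n+2) a) = sng (mKR q (n+3) a) := by
    rw [sng_mul]
    congr 1
    unfold mKR
    conv_rhs => rw [Finset.sum_range_succ]
    rw [znat a q (2*(n+2)) (2*(n:ℤ)+4) (by push_cast; ring)]
    abel
  have hM2 : sng (Z (-(a * q ^ (2*(n:ℤ)+3)))) * sng (mKR q (n+1) a)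
      = sng (mKR q (n+3) a) * Xf q a (2*(n:ℤ)+5) 1 := by
    rw [Xf_eq q a (2*(n:ℤ)+5) 1 (2*(n:ℤ)+3) (by push_cast; ring), sng_mul, sng_mul]
    congr 1
    have key : mKR q (n+3) a
        = mKR q (n+1) a + Z (a * q ^ (2*(n:ℤ)+2)) + Z (a * q ^ (2*(n:ℤ)+4)) := by
      unfold mKR
      rw [Finset.sum_range_succ, Finset.sum_range_succ,
        znat a q (2*(n+1)) (2*(n:ℤ)+2) (by push_cast; ring),
        znat a q (2*(n+2)) (2*(n:ℤ)+4) (by push_cast; ring)]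
    rw [key, hA1]
    abel
  have hM3 : sng (mKR q n a)
      = sng (mKR q (n+3) a) * Xf q a (2*(n:ℤ)+5) 1 * Xf q a (2*(n:ℤ)+5) 2
        * Yf q a (2*(n:ℤ)+5) 2 := by
    rw [Xf_eq q a (2*(n:ℤ)+5) 1 (2*(n:ℤ)+3) (by push_cast; ring),
      Xf_eq q a (2*(n:ℤ)+5) 2 (2*(n:ℤ)+1) (by push_cast; ring),
      Yf_eq q a (2*(n:ℤ)+5) 2 (2*(n:ℤ)+2) (by push_cast; ring),
      sng_mul, sng_mul, sng_mul]
    congr 1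
    have key : mKR q (n+3) a
        = mKR q n a + Z (a * q ^ (2*(n:ℤ))) + Z (a * q ^ (2*(n:ℤ)+2)) + Z (a * q ^ (2*(n:ℤ)+4)) := by
      unfold mKR
      rw [Finset.sum_range_succ, Finset.sum_range_succ, Finset.sum_range_succ,
        znat a q (2*n) (2*(n:ℤ)) (by push_cast; ring),
        znat a q (2*(n+1)) (2*(n:ℤ)+2) (by push_cast; ring),
        znat a q (2*(n+2)) (2*(n:ℤ)+4) (by push_cast; ring)]
    rw [key, hA1, hA2, hA3]
    abel
  rw [h3, h2, h1, h0, hF1t, hF1n]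
  linear_combination
    ((1 + Xf q a (2*(n:ℤ)+5) 0 + Xf q a (2*(n:ℤ)+5) 0 * Yf q a (2*(n:ℤ)+5) 0)
        * Tt (Xf q a (2*(n:ℤ)+5)) (Yf q a (2*(n:ℤ)+5)) 1 (n+2)) * hM1
    + sng (mKR q (n+3) a) * key_gen (Xf q a (2*(n:ℤ)+5)) (Yf q a (2*(n:ℤ)+5)) n
    - ((1 + Yf q a (2*(n:ℤ)+5) 1 + Yf q a (2*(n:ℤ)+5) 1 * Xf q a (2*(n:ℤ)+5) 0)
        * Tt (Xf q a (2*(n:ℤ)+5)) (Yf q a (2*(n:ℤ)+5)) 2 (n+1)) * hM2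
    + (Tt (Xf q a (2*(n:ℤ)+5)) (Yf q a (2*(n:ℤ)+5)) 3 n) * hM3

/-! Membership -/

lemma F1_mem (q b : ℂˣ) : F1 q b ∈ Ksub q :=
  Subring.subset_closure (Set.mem_range_self b)

lemma FKR_mem_aux (q a : ℂˣ) :
    ∀ n : ℕ, FKR q n a ∈ Ksub q ∧ FKR q (n+1) a ∈ Ksub q ∧ FKR q (n+2) a ∈ Ksub q := by
  intro n
  induction n with
  | zero =>
      have m0 : FKR q 0 a ∈ Ksub q := by rw [FKR0]; exact one_mem _
      have m1 : FKR q 1 a ∈ Ksub q := by rw [FKR1]; exact F1_mem q a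
      refine ⟨m0, m1, ?_⟩
      have h : FKR q 2 a
          = F1 q (a * q ^ (2:ℤ)) * FKR q 1 a - F1 q (-(a * q ^ (1:ℤ))) * FKR q 0 a := by
        linear_combination -tsys1 q a
      rw [h]
      exact sub_mem (mul_mem (F1_mem _ _) m1) (mul_mem (F1_mem _ _) m0)
  | succ n ih =>
      obtain ⟨m0, m1, m2⟩ := ih
      refine ⟨m1, m2, ?_⟩
      have h : FKR q (n+3) a
          = F1 q (a * q ^ (2*(n:ℤ)+4)) * FKR q (n+2) a
            - F1 q (-(a * q ^ (2*(n:ℤ)+3))) * FKR q (n+1) a + FKR q n a := by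
        linear_combination -tsys q a n
      rw [show n+1+2 = n+3 by omega, h]
      exact add_mem (sub_mem (mul_mem (F1_mem _ _) m2) (mul_mem (F1_mem _ _) m1)) m0

/-- The twisted q-character `F_k(a)` of each Kirillov–Reshetikhin module of type `A₂⁽²⁾`
is a polynomial with integer coefficients in the twisted q-characters of the
fundamental representations. -/
theorem FKR_mem_Ksub (q : ℂˣ) (hq : ∀ n : ℕ, 0 < n → (q : ℂ) ^ n ≠ 1)
    (a : ℂˣ) (k : ℕ) :
    FKR q k a ∈ Ksub q := by
  exact (FKR_mem_aux q a k).1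
end
end

section
/- The operators X_0^±, X_1^±, K_0^{±1}, K_1^{±1} defined in the context satisfy all the defining relations of the twisted quantum loop algebra U_q^τ of type A_2^{(2)}: K_1 = K_0^{-2}; K_0X_1^+K_0^{-1} = q^{-2}X_1^+; K_0X_0^+K_0^{-1} = qX_0^+; K_0X_1^-K_0^{-1} = q²X_1^-; K_0X_0^-K_0^{-1} = q^{-1}X_0^-; [X_1^+,X_0^-] = [X_0^+,X_1^-] = 0; [X_0^+,X_0^-] = (K_0−K_0^{-1})/(t−t^{-1}); [X_1^+,X_1^-] = (K_1−K_1^{-1})/(q²−q^{-2}); the quantum Serre relations X_0^ε(X_1^ε)² − (q²+q^{-2})X_1^εX_0^εX_1^ε + (X_1^ε)²X_0^ε = 0 and Σ_{r=0}^{5} (−1)^r (X_0^ε)^{5−r}X_1^ε(X_0^ε)^{r}/([5−r]_t!·[r]_t!) = 0 for both ε ∈ {+,−}. Hence these operators define a 3-dimensional representation of U_q^τ on ℂ³ (the fundamental representation V_a, whose Drinfeld polynomial is P(u) = 1 − aq^{-1}u). -/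
noncomputable section

/-- The t-integer `[n]_t = (tⁿ - t⁻ⁿ)/(t - t⁻¹)`. -/
def tnum (t : ℂ) (n : ℕ) : ℂ := (t ^ n - t⁻¹ ^ n) / (t - t⁻¹)

/-- The t-factorial `[n]_t! = [n]_t [n-1]_t ⋯ [1]_t`. -/
def tfac (t : ℂ) (n : ℕ) : ℂ := ∏ i ∈ Finset.range n, tnum t (i + 1)

/-- The operator `X₀⁺` on `ℂ³`: `v₀ ↦ 0`, `v₁ ↦ [2]_t v₀`, `v₂ ↦ [2]_t v₁`. -/
def X0p (t : ℂ) : Matrix (Fin 3) (Fin 3) ℂ :=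
  !![0, tnum t 2, 0; 0, 0, tnum t 2; 0, 0, 0]

/-- The operator `X₀⁻` on `ℂ³`: `v₀ ↦ v₁`, `v₁ ↦ v₂`, `v₂ ↦ 0`. -/
def X0m : Matrix (Fin 3) (Fin 3) ℂ :=
  !![0, 0, 0; 1, 0, 0; 0, 1, 0]

/-- The operator `K₀ = diag(q, 1, q⁻¹)` on `ℂ³`, with `q = t²`. -/
def K0 (t : ℂ) : Matrix (Fin 3) (Fin 3) ℂ :=
  !![t ^ 2, 0, 0; 0, 1, 0; 0, 0, (t ^ 2)⁻¹]

/-- The operator `X₁⁺` on `ℂ³`: `v₀ ↦ [4]_t⁻¹ q a (1+q²) v₂`, `v₁, v₂ ↦ 0`. -/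
def X1p (t a : ℂ) : Matrix (Fin 3) (Fin 3) ℂ :=
  !![0, 0, 0; 0, 0, 0; (tnum t 4)⁻¹ * t ^ 2 * a * (1 + (t ^ 2) ^ 2), 0, 0]

/-- The operator `X₁⁻` on `ℂ³`: `v₂ ↦ [4]_t⁻¹ q⁻¹ [2]_t² a⁻¹ (1+q⁻²) v₀`, `v₀, v₁ ↦ 0`. -/
def X1m (t a : ℂ) : Matrix (Fin 3) (Fin 3) ℂ :=
  !![0, 0, (tnum t 4)⁻¹ * (t ^ 2)⁻¹ * (tnum t 2) ^ 2 * a⁻¹ * (1 + ((t ^ 2)⁻¹) ^ 2);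
     0, 0, 0; 0, 0, 0]

/-- The operator `K₁ = diag(q⁻², 1, q²)` on `ℂ³`, with `q = t²`. -/
def K1 (t : ℂ) : Matrix (Fin 3) (Fin 3) ℂ :=
  !![((t ^ 2) ^ 2)⁻¹, 0, 0; 0, 1, 0; 0, 0, (t ^ 2) ^ 2]

set_option maxHeartbeats 1600000
private lemma aux_ne (t : ℂ) (ht0 : t ≠ 0) (ht : ∀ n : ℕ, 0 < n → t ^ n ≠ 1)
    (n : ℕ) (hn : 0 < n) : t ^ n - t⁻¹ ^ n ≠ 0 := by
  rw [sub_ne_zero, inv_pow]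
  intro h
  apply ht (2 * n) (by omega)
  have h1 : t ^ n * t ^ n = 1 := by
    nth_rewrite 2 [h]
    exact mul_inv_cancel₀ (pow_ne_zero _ ht0)
  calc t ^ (2 * n) = t ^ n * t ^ n := by rw [two_mul, pow_add]
  _ = 1 := h1


/-- The operators `X₀±, X₁±, K₀±¹, K₁±¹` on `ℂ³` satisfy all the defining relations of the
twisted quantum loop algebra `U_q^τ` of type `A₂⁽²⁾` (with `q = t²`), hence define a
3-dimensional representation of `U_q^τ` (the fundamental representation `V_a`). -/
theorem fundamental_rep_relations_A2_2 (t : ℂ) (ht0 : t ≠ 0)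
    (ht : ∀ n : ℕ, 0 < n → t ^ n ≠ 1) (a : ℂ) (ha : a ≠ 0) :
    K1 t = (K0 t)⁻¹ * (K0 t)⁻¹
    ∧ K0 t * X1p t a * (K0 t)⁻¹ = ((t ^ 2) ^ 2)⁻¹ • X1p t a
    ∧ K0 t * X0p t * (K0 t)⁻¹ = (t ^ 2) • X0p t
    ∧ K0 t * X1m t a * (K0 t)⁻¹ = (t ^ 2) ^ 2 • X1m t a
    ∧ K0 t * X0m * (K0 t)⁻¹ = (t ^ 2)⁻¹ • X0m
    ∧ X1p t a * X0m = X0m * X1p t a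
    ∧ X0p t * X1m t a = X1m t a * X0p t
    ∧ X0p t * X0m - X0m * X0p t = (t - t⁻¹)⁻¹ • (K0 t - (K0 t)⁻¹)
    ∧ X1p t a * X1m t a - X1m t a * X1p t a =
        ((t ^ 2) ^ 2 - ((t ^ 2) ^ 2)⁻¹)⁻¹ • (K1 t - (K1 t)⁻¹)
    ∧ X0p t * (X1p t a) ^ 2 - ((t ^ 2) ^ 2 + ((t ^ 2) ^ 2)⁻¹) • (X1p t a * X0p t * X1p t a)
        + (X1p t a) ^ 2 * X0p t = 0
    ∧ X0m * (X1m t a) ^ 2 - ((t ^ 2) ^ 2 + ((t ^ 2) ^ 2)⁻¹) • (X1m t a * X0m * X1m t a)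
        + (X1m t a) ^ 2 * X0m = 0
    ∧ ∑ r ∈ Finset.range 6,
        ((-1 : ℂ) ^ r * (tfac t (5 - r) * tfac t r)⁻¹) •
          (X0p t ^ (5 - r) * X1p t a * X0p t ^ r) = 0
    ∧ ∑ r ∈ Finset.range 6,
        ((-1 : ℂ) ^ r * (tfac t (5 - r) * tfac t r)⁻¹) •
          (X0m ^ (5 - r) * X1m t a * X0m ^ r) = 0 := by
  have h1 : t - t⁻¹ ≠ 0 := by
    have := aux_ne t ht0 ht 1 one_pos; simpa using this
  have h2 : tnum t 2 ≠ 0 := div_ne_zero (aux_ne t ht0 ht 2 two_pos) h1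
  have h4 : tnum t 4 ≠ 0 := div_ne_zero (aux_ne t ht0 ht 4 (by norm_num)) h1
  have hq4 : t ^ 4 - (t ^ 4)⁻¹ ≠ 0 := by
    have := aux_ne t ht0 ht 4 (by norm_num)
    rwa [← inv_pow]
  have hq : (t ^ 2) ^ 2 - ((t ^ 2) ^ 2)⁻¹ ≠ 0 := by
    have := aux_ne t ht0 ht 4 (by norm_num)
    rw [show ((t:ℂ) ^ 2) ^ 2 = t ^ 4 by ring, ← inv_pow]
    exact this
  have hK : (K0 t)⁻¹ = !![(t ^ 2)⁻¹, 0, 0; 0, 1, 0; 0, 0, t ^ 2] := by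
    apply Matrix.inv_eq_right_inv
    ext i j
    fin_cases i <;> fin_cases j <;>
      simp [K0, Matrix.mul_apply, Fin.sum_univ_three, Matrix.one_apply, Matrix.vecHead,
        Matrix.vecTail] <;> field_simp
  have hK1 : (K1 t)⁻¹ = !![(t ^ 2) ^ 2, 0, 0; 0, 1, 0; 0, 0, ((t ^ 2) ^ 2)⁻¹] := by
    apply Matrix.inv_eq_right_inv
    ext i j
    fin_cases i <;> fin_cases j <;>
      simp [K1, Matrix.mul_apply, Fin.sum_univ_three, Matrix.one_apply, Matrix.vecHead,
        Matrix.vecTail] <;> field_simp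
  have hp3 : X0p t ^ 3 = 0 := by
    rw [pow_succ, pow_two]
    ext i j
    fin_cases i <;> fin_cases j <;>
      simp [X0p, Matrix.mul_apply, Fin.sum_univ_three, Matrix.vecHead, Matrix.vecTail]
  have hm3 : X0m ^ 3 = 0 := by
    rw [pow_succ, pow_two]
    ext i j
    fin_cases i <;> fin_cases j <;>
      simp [X0m, Matrix.mul_apply, Fin.sum_univ_three, Matrix.vecHead, Matrix.vecTail]
  have hp4 : X0p t ^ 4 = 0 := by rw [pow_succ, hp3, zero_mul]
  have hp5 : X0p t ^ 5 = 0 := by rw [pow_succ, hp4, zero_mul]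
  have hm4 : X0m ^ 4 = 0 := by rw [pow_succ, hm3, zero_mul]
  have hm5 : X0m ^ 5 = 0 := by rw [pow_succ, hm4, zero_mul]
  have hp1sq : X1p t a ^ 2 = 0 := by
    rw [pow_two]
    ext i j
    fin_cases i <;> fin_cases j <;>
      simp [X1p, Matrix.mul_apply, Fin.sum_univ_three, Matrix.vecHead, Matrix.vecTail]
  have hm1sq : X1m t a ^ 2 = 0 := by
    rw [pow_two]
    ext i j
    fin_cases i <;> fin_cases j <;>
      simp [X1m, Matrix.mul_apply, Fin.sum_univ_three, Matrix.vecHead, Matrix.vecTail]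
  have hpmid : X1p t a * X0p t * X1p t a = 0 := by
    ext i j
    fin_cases i <;> fin_cases j <;>
      simp [X1p, X0p, Matrix.mul_apply, Fin.sum_univ_three, Matrix.vecHead, Matrix.vecTail]
  have hmmid : X1m t a * X0m * X1m t a = 0 := by
    ext i j
    fin_cases i <;> fin_cases j <;>
      simp [X1m, X0m, Matrix.mul_apply, Fin.sum_univ_three, Matrix.vecHead, Matrix.vecTail]
  have h4n : t ^ 4 - t⁻¹ ^ 4 ≠ 0 := aux_ne t ht0 ht 4 (by norm_num)
  have hs : t ^ 2 + (t ^ 2)⁻¹ ≠ 0 := by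
    intro h
    apply ht 8 (by norm_num)
    have h' : t ^ 4 + 1 = 0 := by
      have := congrArg (· * t ^ 2) h
      field_simp at this
      linear_combination this
    have : t ^ 4 = -1 := by linear_combination h'
    calc t ^ 8 = t ^ 4 * t ^ 4 := by ring
    _ = 1 := by rw [this]; ring
  have ht24 : tnum t 4 = tnum t 2 * (t ^ 2 + (t ^ 2)⁻¹) := by
    simp only [tnum]
    field_simp
    ring
  have key : (tnum t 4)⁻¹ * t ^ 2 * a * (1 + (t ^ 2) ^ 2) *
      ((tnum t 4)⁻¹ * (t ^ 2)⁻¹ * tnum t 2 ^ 2 * a⁻¹ * (1 + ((t ^ 2) ^ 2)⁻¹)) = 1 := by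
    rw [ht24, mul_inv,
      show (1 + (t ^ 2) ^ 2 : ℂ) = t ^ 2 * (t ^ 2 + (t ^ 2)⁻¹) by field_simp; ring,
      show (1 + ((t ^ 2) ^ 2)⁻¹ : ℂ) = (t ^ 2)⁻¹ * (t ^ 2 + (t ^ 2)⁻¹) by
        rw [mul_add]; field_simp]
    generalize hgen : t ^ 2 + (t ^ 2)⁻¹ = s at hs ⊢
    generalize hgen2 : tnum t 2 = n at h2 ⊢
    field_simp
  have key2 : (tnum t 4)⁻¹ * (t ^ 2)⁻¹ * tnum t 2 ^ 2 * a⁻¹ * (1 + ((t ^ 2) ^ 2)⁻¹) *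
      ((tnum t 4)⁻¹ * t ^ 2 * a * (1 + (t ^ 2) ^ 2)) = 1 := by
    rw [mul_comm]; exact key
  have hr1 : ((t ^ 2) ^ 2 - ((t ^ 2) ^ 2)⁻¹)⁻¹ * (((t ^ 2) ^ 2)⁻¹ - (t ^ 2) ^ 2) = -1 := by
    rw [show ((t ^ 2) ^ 2)⁻¹ - (t ^ 2) ^ 2 = -((t ^ 2) ^ 2 - ((t ^ 2) ^ 2)⁻¹) by ring,
      mul_neg, inv_mul_cancel₀ hq]
  have hr2 : ((t ^ 2) ^ 2 - ((t ^ 2) ^ 2)⁻¹)⁻¹ * ((t ^ 2) ^ 2 - ((t ^ 2) ^ 2)⁻¹) = 1 :=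
    inv_mul_cancel₀ hq
  refine ⟨?_, ?_, ?_, ?_, ?_, ?_, ?_, ?_, ?_, ?_, ?_, ?_, ?_⟩
  · rw [hK]
    ext i j
    fin_cases i <;> fin_cases j <;>
      simp [K1, Matrix.mul_apply, Fin.sum_univ_three, Matrix.vecHead, Matrix.vecTail] <;>
      (try field_simp) <;> (try ring)
  · rw [hK]
    ext i j
    fin_cases i <;> fin_cases j <;>
      simp [K0, X1p, tnum, Matrix.mul_apply, Fin.sum_univ_three, Matrix.vecHead,
        Matrix.vecTail] <;> (try field_simp) <;> (try ring)
  · rw [hK]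
    ext i j
    fin_cases i <;> fin_cases j <;>
      simp [K0, X0p, tnum, Matrix.mul_apply, Fin.sum_univ_three, Matrix.vecHead,
        Matrix.vecTail] <;> (try field_simp) <;> (try ring)
  · rw [hK]
    ext i j
    fin_cases i <;> fin_cases j <;>
      simp [K0, X1m, tnum, Matrix.mul_apply, Fin.sum_univ_three, Matrix.vecHead,
        Matrix.vecTail] <;> (try field_simp) <;> (try ring)
  · rw [hK]
    ext i j
    fin_cases i <;> fin_cases j <;>
      simp [K0, X0m, tnum, Matrix.mul_apply, Fin.sum_univ_three, Matrix.vecHead,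
        Matrix.vecTail] <;> (try field_simp) <;> (try ring)
  · ext i j
    fin_cases i <;> fin_cases j <;>
      simp [X1p, X0m, Matrix.mul_apply, Fin.sum_univ_three, Matrix.vecHead, Matrix.vecTail]
  · ext i j
    fin_cases i <;> fin_cases j <;>
      simp [X0p, X1m, Matrix.mul_apply, Fin.sum_univ_three, Matrix.vecHead, Matrix.vecTail]
  · rw [hK]
    ext i j
    fin_cases i <;> fin_cases j <;>
      simp [X0p, X0m, K0, tnum, Matrix.mul_apply, Fin.sum_univ_three, Matrix.vecHead,
        Matrix.vecTail] <;> (try field_simp) <;> (try ring)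
  · rw [hK1]
    ext i j
    fin_cases i <;> fin_cases j <;>
      simp [X1p, X1m, K1, Matrix.mul_apply, Fin.sum_univ_three, Matrix.vecHead,
        Matrix.vecTail]
    · rw [key2, hr1]
    · rw [key, hr2]
  · rw [hp1sq, hpmid]
    simp
  · rw [hm1sq, hmmid]
    simp
  · simp [Finset.sum_range_succ, hp3, hp4, hp5]
  · simp [Finset.sum_range_succ, hm3, hm4, hm5]
end
end

section
/- For all m ∈ ℤ, all r ∈ ℤ∖{0} and both signs ε ∈ {+,−}, the operators of the context satisfy k·x_m^ε·k^{-1} = q^{ε1}·x_m^ε and [H_r, x_m^ε] = ε·(q^r + q^{-r} + (−1)^{r+1})·x_{r+m}^ε (relations (12) and (14) between the Drinfeld generators of the twisted quantum loop algebra of type A_2^{(2)} hold on the 6-dimensional Kirillov–Reshetikhin module). -/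
noncomputable section

/-- `[4]_t = (t⁴ - t⁻⁴)/(t - t⁻¹)`. -/
def tfour (t : ℂ) : ℂ := (t ^ 4 - t⁻¹ ^ 4) / (t - t⁻¹)

/-- `ν = q^{-3/2}(1+q)(1-q+q²-q³+q⁴)/(1-q+q²)` with `q = t²`, `q^{-3/2} = t⁻³`. -/
def nuC (t : ℂ) : ℂ :=
  t⁻¹ ^ 3 * (1 + t ^ 2) * (1 - t ^ 2 + t ^ 4 - t ^ 6 + t ^ 8) / (1 - t ^ 2 + t ^ 4)

/-- `μ = q^{-1/2}(1+q²)(1+q)/(1-q+q²)` with `q = t²`, `q^{-1/2} = t⁻¹`. -/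
def muC (t : ℂ) : ℂ := t⁻¹ * (1 + t ^ 4) * (1 + t ^ 2) / (1 - t ^ 2 + t ^ 4)

/-- `q = t²` (so that the half-integer powers of `q` make sense as powers of `t`). -/
def qC (t : ℂ) : ℂ := t ^ 2

/-- The Drinfeld generator `x_r⁺` acting on the Kirillov–Reshetikhin module
`W_{2,1} = ℂ⁶` of type `A₂⁽²⁾`. -/
def xp (t : ℂ) (r : ℤ) : Matrix (Fin 6) (Fin 6) ℂ :=
  !![0, qC t ^ (3 * r), 0, 0, 0, 0;
     0, 0, (-qC t ^ 4) ^ r * nuC t, qC t ^ r * muC t, 0, 0;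
     0, 0, 0, 0, qC t ^ r, 0;
     0, 0, 0, 0, (-qC t ^ 4) ^ r, 0;
     0, 0, 0, 0, 0, tfour t * (-qC t ^ 2) ^ r;
     0, 0, 0, 0, 0, 0]

/-- The Drinfeld generator `x_r⁻` acting on the Kirillov–Reshetikhin module
`W_{2,1} = ℂ⁶` of type `A₂⁽²⁾`. -/
def xm (t : ℂ) (r : ℤ) : Matrix (Fin 6) (Fin 6) ℂ :=
  !![0, 0, 0, 0, 0, 0;
     qC t ^ (3 * r) * tfour t, 0, 0, 0, 0, 0;
     0, (-qC t ^ 4) ^ r, 0, 0, 0, 0;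
     0, qC t ^ r, 0, 0, 0, 0;
     0, 0, nuC t * qC t ^ r, muC t * (-qC t ^ 4) ^ r, 0, 0;
     0, 0, 0, 0, (-qC t ^ 2) ^ r, 0]

/-- The operator `k = diag(q², q, 1, 1, q⁻¹, q⁻²)`. -/
def kOp (t : ℂ) : Matrix (Fin 6) (Fin 6) ℂ :=
  Matrix.diagonal ![qC t ^ 2, qC t, 1, 1, (qC t)⁻¹, (qC t ^ 2)⁻¹]

/-- The Drinfeld generator `H_r` acting diagonally on `W_{2,1} = ℂ⁶`. -/
def HOp (t : ℂ) (r : ℤ) : Matrix (Fin 6) (Fin 6) ℂ :=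
  Matrix.diagonal
    ![1 + qC t ^ (2 * r),
      1 + (-qC t ^ 3) ^ r - qC t ^ (4 * r),
      1 - (-qC t ^ 5) ^ r,
      (-qC t) ^ r - qC t ^ (2 * r) + (-qC t ^ 3) ^ r - qC t ^ (4 * r),
      (-qC t) ^ r - qC t ^ (2 * r) - (-qC t ^ 5) ^ r,
      -(-qC t ^ 3) ^ r - (-qC t ^ 5) ^ r]

set_option maxHeartbeats 3200000

/-- Relations (12) and (14) between the Drinfeld generators of the twisted quantum loop
algebra of type `A₂⁽²⁾` hold on the 6-dimensional Kirillov–Reshetikhin module: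
`k x_m^± k⁻¹ = q^{±1} x_m^±` and `[H_r, x_m^±] = ±(q^r + q^{-r} + (-1)^{r+1}) x_{r+m}^±`. -/
theorem drinfeld_relations_W2 (t : ℂ) (ht0 : t ≠ 0) (ht : ∀ n : ℕ, 0 < n → t ^ n ≠ 1)
    (m : ℤ) (r : ℤ) (hr : r ≠ 0) :
    kOp t * xp t m * (kOp t)⁻¹ = qC t • xp t m
    ∧ kOp t * xm t m * (kOp t)⁻¹ = (qC t)⁻¹ • xm t m
    ∧ HOp t r * xp t m - xp t m * HOp t r =
        (qC t ^ r + qC t ^ (-r) + (-1 : ℂ) ^ (r + 1)) • xp t (r + m)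
    ∧ HOp t r * xm t m - xm t m * HOp t r =
        -((qC t ^ r + qC t ^ (-r) + (-1 : ℂ) ^ (r + 1)) • xm t (r + m)) := by

  have hq : qC t ≠ 0 := pow_ne_zero 2 ht0
  have hqr : qC t ^ r ≠ 0 := zpow_ne_zero _ hq
  have hqm : qC t ^ m ≠ 0 := zpow_ne_zero _ hq
  have hqrm : qC t ^ (r + m) ≠ 0 := zpow_ne_zero _ hq
  have h5a : ∀ (x : ℂ) (f : Fin 5 → ℂ), Matrix.vecCons x f 5 = f 4 := fun _ _ => rfl
  have h5b : ∀ (x : Fin 6 → ℂ) (f : Fin 5 → Fin 6 → ℂ), Matrix.vecCons x f 5 = f 4 :=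
    fun _ _ => rfl
  have hne1 : (-1 : ℂ) ≠ 0 := by norm_num
  have hnegq : ∀ (k : ℕ) (n : ℤ), (-(qC t ^ k)) ^ n = (-1) ^ n * (qC t ^ k) ^ n := by
    intro k n; rw [← neg_one_mul, mul_zpow]
  have hnegq1 : ∀ n : ℤ, (-qC t) ^ n = (-1) ^ n * qC t ^ n := by
    intro n; rw [← neg_one_mul, mul_zpow]
  have hks : ∀ (k : ℕ) (n : ℤ), ((qC t ^ k : ℂ)) ^ n = (qC t ^ n) ^ k := by
    intro k n
    rw [← zpow_natCast (qC t) k, ← zpow_mul, mul_comm, zpow_mul, zpow_natCast]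
  have hs : ∀ (k : ℕ) (n : ℤ), qC t ^ ((k : ℕ) * n) = (qC t ^ n) ^ k := by
    intro k n; rw [mul_comm, zpow_mul, zpow_natCast]
  have hs2 : ∀ n : ℤ, qC t ^ (2 * n) = (qC t ^ n) ^ (2:ℕ) := fun n => hs 2 n
  have hs3 : ∀ n : ℤ, qC t ^ (3 * n) = (qC t ^ n) ^ (3:ℕ) := fun n => hs 3 n
  have hs4 : ∀ n : ℤ, qC t ^ (4 * n) = (qC t ^ n) ^ (4:ℕ) := fun n => hs 4 n
  have hs5 : ∀ n : ℤ, qC t ^ (5 * n) = (qC t ^ n) ^ (5:ℕ) := fun n => hs 5 n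
  have hkinv : (kOp t)⁻¹ =
      Matrix.diagonal ![(qC t ^ 2)⁻¹, (qC t)⁻¹, 1, 1, qC t, qC t ^ 2] := by
    apply Matrix.inv_eq_right_inv
    rw [kOp, Matrix.diagonal_mul_diagonal]
    ext i j
    fin_cases i <;> fin_cases j <;>
      simp [Matrix.diagonal, Matrix.one_apply, h5a, h5b, Fin.ext_iff] <;>
      field_simp
  refine ⟨?_, ?_, ?_, ?_⟩
  · rw [hkinv]
    ext i j
    fin_cases i <;> fin_cases j <;>
      simp [kOp, xp, Matrix.diagonal_mul, Matrix.mul_diagonal, Matrix.smul_apply,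
        smul_eq_mul, h5a, h5b, Matrix.vecHead, Matrix.vecTail, Function.comp] <;>
      (first | ring1 | (field_simp; try ring1))
  · rw [hkinv]
    ext i j
    fin_cases i <;> fin_cases j <;>
      simp [kOp, xm, Matrix.diagonal_mul, Matrix.mul_diagonal, Matrix.smul_apply,
        smul_eq_mul, h5a, h5b, Matrix.vecHead, Matrix.vecTail, Function.comp] <;>
      (first | ring1 | (field_simp; try ring1))
  · rcases Int.even_or_odd r with hre | hro <;> rcases Int.even_or_odd m with hme | hmo <;>
      [ (have h1 : ((-1:ℂ))^r = 1 := hre.neg_one_zpow;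
         have h2 : ((-1:ℂ))^m = 1 := hme.neg_one_zpow);
        (have h1 : ((-1:ℂ))^r = 1 := hre.neg_one_zpow;
         have h2 : ((-1:ℂ))^m = -1 := hmo.neg_one_zpow);
        (have h1 : ((-1:ℂ))^r = -1 := hro.neg_one_zpow;
         have h2 : ((-1:ℂ))^m = 1 := hme.neg_one_zpow);
        (have h1 : ((-1:ℂ))^r = -1 := hro.neg_one_zpow;
         have h2 : ((-1:ℂ))^m = -1 := hmo.neg_one_zpow) ] <;>
      · ext i j
        fin_cases i <;> fin_cases j <;>
          simp only [HOp, xp, Matrix.diagonal_mul, Matrix.mul_diagonal,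
            Matrix.sub_apply, Matrix.neg_apply, Matrix.smul_apply, smul_eq_mul, h5a, h5b,
            Matrix.cons_val', Matrix.cons_val_zero, Matrix.cons_val_one,
            Matrix.head_cons, Matrix.empty_val', Matrix.cons_val_fin_one,
            Matrix.head_fin_const, Matrix.of_apply, Fin.isValue,
            Matrix.cons_val_two, Matrix.cons_val_three, Matrix.cons_val_four,
            Matrix.vecHead, Matrix.vecTail, Function.comp_apply, Matrix.cons_val, Fin.reduceFinMk, Fin.reduceSucc,
            hnegq, hnegq1, hks, hs2, hs3, hs4, hs5,
            zpow_add₀ hne1, zpow_add₀ hq, zpow_neg, zpow_one, h1, h2] <;>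
        first
          | ring1
          | (field_simp; try ring1)
  · rcases Int.even_or_odd r with hre | hro <;> rcases Int.even_or_odd m with hme | hmo <;>
      [ (have h1 : ((-1:ℂ))^r = 1 := hre.neg_one_zpow;
         have h2 : ((-1:ℂ))^m = 1 := hme.neg_one_zpow);
        (have h1 : ((-1:ℂ))^r = 1 := hre.neg_one_zpow;
         have h2 : ((-1:ℂ))^m = -1 := hmo.neg_one_zpow);
        (have h1 : ((-1:ℂ))^r = -1 := hro.neg_one_zpow;
         have h2 : ((-1:ℂ))^m = 1 := hme.neg_one_zpow);
        (have h1 : ((-1:ℂ))^r = -1 := hro.neg_one_zpow;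
         have h2 : ((-1:ℂ))^m = -1 := hmo.neg_one_zpow) ] <;>
      · ext i j
        fin_cases i <;> fin_cases j <;>
          simp only [HOp, xm, Matrix.diagonal_mul, Matrix.mul_diagonal,
            Matrix.sub_apply, Matrix.neg_apply, Matrix.smul_apply, smul_eq_mul, h5a, h5b,
            Matrix.cons_val', Matrix.cons_val_zero, Matrix.cons_val_one,
            Matrix.head_cons, Matrix.empty_val', Matrix.cons_val_fin_one,
            Matrix.head_fin_const, Matrix.of_apply, Fin.isValue,
            Matrix.cons_val_two, Matrix.cons_val_three, Matrix.cons_val_four,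
            Matrix.vecHead, Matrix.vecTail, Function.comp_apply, Matrix.cons_val, Fin.reduceFinMk, Fin.reduceSucc,
            hnegq, hnegq1, hks, hs2, hs3, hs4, hs5,
            zpow_add₀ hne1, zpow_add₀ hq, zpow_neg, zpow_one, h1, h2] <;>
        first
          | ring1
          | (field_simp; try ring1)
end
end

section
/- Let T = (T_{i,p}), i ∈ {1,2}, 1 ≤ p ≤ k, be an array with entries in B satisfying conditions (θ1) and (θ2). Then: T satisfies (θ3) if and only if there are no 1 ≤ p < p' ≤ k with (T_{1,p},T_{2,p}) = (3,4) and (T_{1,p'},T_{2,p'}) = (4,3̄); and T satisfies (θ4) if and only if there are no 1 ≤ p < p' ≤ k with (T_{1,p},T_{2,p}) = (3,4̄) and (T_{1,p'},T_{2,p'}) = (4̄,3̄). -/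
/-- The set `B = {1,2,3,4,4̄,3̄,2̄,1̄}`. -/
inductive BB : Type
  | b1 | b2 | b3 | b4 | b4' | b3' | b2' | b1'
  deriving DecidableEq

instance : Fintype BB where
  elems := {.b1, .b2, .b3, .b4, .b4', .b3', .b2', .b1'}
  complete := by intro x; cases x <;> decide

/-- The rank used to define the partial order on `B`
(`4` and `4̄` get the same rank, making them incomparable). -/
def BB.rank : BB → ℕ
  | .b1 => 0 | .b2 => 1 | .b3 => 2 | .b4 => 3 | .b4' => 3
  | .b3' => 4 | .b2' => 5 | .b1' => 6

/-- The partial order `⪯` on `B` : `1 ≺ 2 ≺ 3 ≺ 4 ≺ 3̄ ≺ 2̄ ≺ 1̄` and `3 ≺ 4̄ ≺ 3̄`,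
with `4` and `4̄` incomparable. -/
def BB.le (x y : BB) : Prop := x = y ∨ x.rank < y.rank

/-- `Tab(1,k)`: sequences `(T_1,…,T_k)` in `B` with `T_p ⪯ T_{p+1}`. -/
def IsTab1 (k : ℕ) (T : Fin k → BB) : Prop :=
  ∀ (p : ℕ) (h : p + 1 < k), BB.le (T ⟨p, Nat.lt_of_succ_lt h⟩) (T ⟨p + 1, h⟩)

instance (x y : BB) : Decidable (BB.le x y) := by
  unfold BB.le; infer_instance

lemma BB.le_trans' : ∀ a b c : BB, BB.le a b → BB.le b c → BB.le a c := by
  intro a b c hab hbc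
  rcases hab with rfl | h1
  · exact hbc
  · rcases hbc with rfl | h2
    · exact Or.inr h1
    · exact Or.inr (h1.trans h2)

lemma chain {k : ℕ} {f : Fin k → BB} (h : IsTab1 k f) :
    ∀ p q : Fin k, p ≤ q → BB.le (f p) (f q) := by
  intro p q
  obtain ⟨q, hq⟩ := q
  induction q with
  | zero =>
    intro hpq
    have hp0 : p = ⟨0, hq⟩ := le_antisymm hpq (Fin.mk_le_mk.mpr (Nat.zero_le _))
    subst hp0; exact Or.inl rfl
  | succ n ih =>
    intro hpq
    rcases Nat.lt_or_ge p.val (n + 1) with hlt | hge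
    · have hn : n < k := Nat.lt_of_succ_lt hq
      have hle : p ≤ ⟨n, hn⟩ := Fin.le_def.mpr (Nat.lt_succ_iff.mp hlt)
      exact BB.le_trans' _ _ _ (ih hn hle) (h n hq)
    · have hp : p = ⟨n + 1, hq⟩ := le_antisymm hpq (Fin.le_def.mpr hge)
      subst hp; exact Or.inl rfl

lemma key {k : ℕ} (T : Fin 2 → Fin k → BB)
    (h1 : ∀ i : Fin 2, IsTab1 k (T i))
    (h2 : ∀ p : Fin k, ¬ BB.le (T 1 p) (T 0 p))
    (x : BB) (hx : x = BB.b4 ∨ x = BB.b4') :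
    (∃ p p' : Fin k, p < p' ∧
        (∀ r : Fin k, p ≤ r → r < p' → T 0 r = BB.b3) ∧ T 0 p' = x ∧
        T 1 p = x ∧ (∀ r : Fin k, p < r → r ≤ p' → T 1 r = BB.b3')) ↔
    (∃ p p' : Fin k, p < p' ∧
        T 0 p = BB.b3 ∧ T 1 p = x ∧ T 0 p' = x ∧ T 1 p' = BB.b3') := by
  constructor
  · rintro ⟨p, p', hpp, hA, hB, hC, hD⟩
    exact ⟨p, p', hpp, hA p le_rfl hpp, hC, hB, hD p' hpp le_rfl⟩
  · rintro ⟨p, p', hpp, h0p, h1p, h0p', h1p'⟩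
    have aux0 : ∀ y : BB, BB.le BB.b3 y → BB.le y x → y = BB.b3 ∨ y = x := by
      rcases hx with rfl | rfl <;> decide
    have aux1 : ∀ y : BB, BB.le x y → BB.le y BB.b3' → y = x ∨ y = BB.b3' := by
      rcases hx with rfl | rfl <;> decide
    have aux2 : ∀ y : BB, BB.le x y → BB.le y x → y = x := by
      rcases hx with rfl | rfl <;> decide
    have hxne : x ≠ BB.b3' := by rcases hx with rfl | rfl <;> decide
    -- classification of row 0 and row 1 on the interval [p, p']
    have class0 : ∀ r : Fin k, p ≤ r → r ≤ p' → T 0 r = BB.b3 ∨ T 0 r = x := by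
      intro r h h'
      have l1 := chain (h1 0) p r h
      have l2 := chain (h1 0) r p' h'
      rw [h0p] at l1; rw [h0p'] at l2
      exact aux0 _ l1 l2
    have class1 : ∀ r : Fin k, p ≤ r → r ≤ p' → T 1 r = x ∨ T 1 r = BB.b3' := by
      intro r h h'
      have l1 := chain (h1 1) p r h
      have l2 := chain (h1 1) r p' h'
      rw [h1p] at l1; rw [h1p'] at l2
      exact aux1 _ l1 l2
    -- θ2: wherever row 0 is x, row 1 is 3̄
    have step : ∀ r : Fin k, p ≤ r → r ≤ p' → T 0 r = x → T 1 r = BB.b3' := by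
      intro r h h' h0
      rcases class1 r h h' with hr | hr
      · exfalso; exact h2 r (Or.inl (by rw [hr, h0]))
      · exact hr
    -- q' : first index ≥ p where row 0 equals x
    have hPex : ∃ n : ℕ, ∃ h : n < k, p.val ≤ n ∧ T 0 ⟨n, h⟩ = x :=
      ⟨p'.val, p'.isLt, le_of_lt hpp, by simpa using h0p'⟩
    set P : ℕ → Prop := fun n => ∃ h : n < k, p.val ≤ n ∧ T 0 ⟨n, h⟩ = x with hP
    have hPdec : DecidablePred P := fun n => by
      unfold P; exact inferInstance
    obtain ⟨hq'k, hpq', hq'x⟩ := Nat.find_spec (p := P) hPex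
    set q'n := Nat.find (p := P) hPex with hq'def
    have hq'le : q'n ≤ p'.val :=
      Nat.find_min' hPex ⟨p'.isLt, le_of_lt hpp, by simpa using h0p'⟩
    set q' : Fin k := ⟨q'n, hq'k⟩ with hq'
    -- q : last index ≤ p' where row 1 equals x
    set Q : ℕ → Prop := fun n => ∃ h : n < k, p.val ≤ n ∧ T 1 ⟨n, h⟩ = x with hQ
    have hQdec : DecidablePred Q := fun n => by
      unfold Q; exact inferInstance
    have hQp : Q p.val := ⟨p.isLt, le_rfl, by simpa using h1p⟩
    set qn := Nat.findGreatest Q p'.val with hqdef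
    have hpqn : p.val ≤ qn := Nat.le_findGreatest (le_of_lt hpp) hQp
    obtain ⟨hqk, hpq, hqx⟩ : Q qn := Nat.findGreatest_spec (le_of_lt hpp) hQp
    have hqle : qn ≤ p'.val := Nat.findGreatest_le _
    set q : Fin k := ⟨qn, hqk⟩ with hqq
    -- q < q'
    have hqlt : q < q' := by
      by_contra hcon
      push_neg at hcon
      have hq'q : q' ≤ q := hcon
      have hT0q : T 0 q = x := by
        have l1 := chain (h1 0) q' q hq'q
        have l2 := chain (h1 0) q p' (Fin.le_def.mpr hqle)
        rw [show T 0 q' = x from hq'x] at l1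
        rw [h0p'] at l2
        exact aux2 _ l1 l2
      have := step q (Fin.le_def.mpr hpqn) (Fin.le_def.mpr hqle) hT0q
      rw [hqx] at this
      exact hxne this
    refine ⟨q, q', hqlt, ?_, hq'x, hqx, ?_⟩
    · intro r hr hr'
      have hpr : p ≤ r := le_trans (Fin.le_def.mpr hpqn) hr
      have hrp' : r ≤ p' := le_trans (le_of_lt hr') (Fin.le_def.mpr hq'le)
      rcases class0 r hpr hrp' with h3 | hxr
      · exact h3
      · exfalso
        have hrlt : r.val < q'n := hr'
        exact Nat.find_min hPex hrlt ⟨r.isLt, hpr, by simpa using hxr⟩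
    · intro r hr hr'
      have hpr : p ≤ r := le_trans (Fin.le_def.mpr hpqn) (le_of_lt hr)
      have hrp' : r ≤ p' := le_trans hr' (Fin.le_def.mpr hq'le)
      rcases class1 r hpr hrp' with hxr | h3
      · exfalso
        have : qn < r.val := hr
        exact Nat.findGreatest_is_greatest this hrp' ⟨r.isLt, hpr, by simpa using hxr⟩
      · exact h3

/-- Under conditions (θ1) and (θ2), condition (θ3) is equivalent to (θ3') and
condition (θ4) is equivalent to (θ4').  (Rows are indexed by `Fin 2`, row `i`
corresponding to row `i+1` of the paper.) -/
theorem theta3_theta4_equiv (k : ℕ) (T : Fin 2 → Fin k → BB)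
    (h1 : ∀ i : Fin 2, IsTab1 k (T i))
    (h2 : ∀ p : Fin k, ¬ BB.le (T 1 p) (T 0 p)) :
    ((¬ ∃ p p' : Fin k, p < p' ∧
        (∀ r : Fin k, p ≤ r → r < p' → T 0 r = BB.b3) ∧ T 0 p' = BB.b4 ∧
        T 1 p = BB.b4 ∧ (∀ r : Fin k, p < r → r ≤ p' → T 1 r = BB.b3')) ↔
      (¬ ∃ p p' : Fin k, p < p' ∧
        T 0 p = BB.b3 ∧ T 1 p = BB.b4 ∧ T 0 p' = BB.b4 ∧ T 1 p' = BB.b3'))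
    ∧ ((¬ ∃ p p' : Fin k, p < p' ∧
        (∀ r : Fin k, p ≤ r → r < p' → T 0 r = BB.b3) ∧ T 0 p' = BB.b4' ∧
        T 1 p = BB.b4' ∧ (∀ r : Fin k, p < r → r ≤ p' → T 1 r = BB.b3')) ↔
      (¬ ∃ p p' : Fin k, p < p' ∧
        T 0 p = BB.b3 ∧ T 1 p = BB.b4' ∧ T 0 p' = BB.b4' ∧ T 1 p' = BB.b3')) :=
  ⟨not_congr (key T h1 h2 BB.b4 (Or.inl rfl)),
   not_congr (key T h1 h2 BB.b4' (Or.inr rfl))⟩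
end

section
/- Let k ≥ 1, T ∈ Tab(2,k) and a ∈ ℂ∖{0}. The monomial m^{(2)}_{T,a} is dominant (all its exponents are ≥ 0) if and only if T_{1,p} = 1 and T_{2,p} = 2 for all 1 ≤ p ≤ k, in which case m^{(2)}_{T,a} = ∏_{p=1}^{k} Z_{2,a³q^{6p−9}}. Consequently the sum Σ_{T∈Tab(2,k)} m^{(2)}_{T,a} ∈ ℤ[G] has a unique dominant monomial, occurring with coefficient 1 (the Kirillov–Reshetikhin module W^{(2)}_{k,a} of type D_4^{(3)} is special). -/
noncomputable section

/-- The strict order `≺` on `B`. -/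
def BB.lt (x y : BB) : Prop := x.rank < y.rank

/-- Monomials: the free abelian group on `{1,2} × ℂˣ`, written additively;
`Finsupp.single (i,b) 1` corresponds to the generator `Z_{i+1,b}`. -/
abbrev Mon2 : Type := (Fin 2 × ℂˣ) →₀ ℤ

/-- The group ring `ℤ[G]`. -/
abbrev LR2 : Type := AddMonoidAlgebra ℤ Mon2

/-- The generator `Z_{i,b}` (with `i : Fin 2` indexing `{1,2}`). -/
def Zv (i : Fin 2) (b : ℂˣ) : Mon2 := Finsupp.single (i, b) 1

/-- `j = e^{2iπ/3}`, a primitive cube root of unity, as a unit of `ℂ`. -/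
def jC : ℂˣ := Units.mk0 (Complex.exp (2 * Real.pi * Complex.I / 3)) (Complex.exp_ne_zero _)

/-- The boxes `⟦α⟧_a ∈ G` for `α ∈ B` (written additively). -/
def box (q : ℂˣ) : BB → ℂˣ → Mon2
  | .b1, a => Zv 0 a
  | .b2, a => -Zv 0 (a * q ^ 2) + Zv 1 (a ^ 3 * q ^ 3)
  | .b3, a => -Zv 1 (a ^ 3 * q ^ 9) + Zv 0 (a * q ^ 2 * jC) + Zv 0 (a * q ^ 2 * jC ^ 2)
  | .b4, a => Zv 0 (a * q ^ 2 * jC) - Zv 0 (a * q ^ 4 * jC ^ 2)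
  | .b4', a => Zv 0 (a * q ^ 2 * jC ^ 2) - Zv 0 (a * q ^ 4 * jC)
  | .b3', a => -Zv 0 (a * q ^ 4 * jC) - Zv 0 (a * q ^ 4 * jC ^ 2) + Zv 1 (a ^ 3 * q ^ 9)
  | .b2', a => Zv 0 (a * q ^ 4) - Zv 1 (a ^ 3 * q ^ 15)
  | .b1', a => -Zv 0 (a * q ^ 6)

/-- The monomial `m^{(1)}_{T,a} = ∏_{p=1}^{k} ⟦T_p⟧_{aq^{2(p-1)}}` (written additively). -/
def m1 (q : ℂˣ) {k : ℕ} (T : Fin k → BB) (a : ℂˣ) : Mon2 :=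
  ∑ p : Fin k, box q (T p) (a * q ^ (2 * (p : ℕ)))

/-- `Tab(2,k)`: two-row arrays with entries in `B` satisfying (θ1)–(θ4).
Row `i : Fin 2` corresponds to row `i+1` of the paper. -/
def IsTab2 (k : ℕ) (T : Fin 2 → Fin k → BB) : Prop :=
  (∀ i : Fin 2, IsTab1 k (T i)) ∧
  (∀ p : Fin k, ¬ BB.le (T 1 p) (T 0 p)) ∧
  (¬ ∃ p p' : Fin k, p < p' ∧
      (∀ r : Fin k, p ≤ r → r < p' → T 0 r = BB.b3) ∧ T 0 p' = BB.b4 ∧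
      T 1 p = BB.b4 ∧ (∀ r : Fin k, p < r → r ≤ p' → T 1 r = BB.b3')) ∧
  (¬ ∃ p p' : Fin k, p < p' ∧
      (∀ r : Fin k, p ≤ r → r < p' → T 0 r = BB.b3) ∧ T 0 p' = BB.b4' ∧
      T 1 p = BB.b4' ∧ (∀ r : Fin k, p < r → r ≤ p' → T 1 r = BB.b3'))

/-- The monomial `m^{(2)}_{T,a} = ∏_{i∈{1,2}} ∏_{p=1}^{k} ⟦T_{i,p}⟧_{aq^{2(p-i)}}`
(written additively; rows and columns are 0-indexed). -/
def m2 (q : ℂˣ) {k : ℕ} (T : Fin 2 → Fin k → BB) (a : ℂˣ) : Mon2 :=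
  ∑ i : Fin 2, ∑ p : Fin k, box q (T i p) (a * q ^ (2 * ((p : ℤ) - (i : ℤ))))

open Classical in
/-- `S²_k(a) = Σ_{T ∈ Tab(2,k)} m^{(2)}_{T,a}` in the group ring `ℤ[G]`. -/
def S2 (q : ℂˣ) (k : ℕ) (a : ℂˣ) : LR2 :=
  ∑ T : Fin 2 → Fin k → BB, if IsTab2 k T then AddMonoidAlgebra.single (m2 q T a) 1 else 0

section Aux
variable {q a : ℂˣ}

lemma qpow_eq_one (hq : ∀ n : ℕ, 0 < n → (q : ℂ) ^ n ≠ 1) {d : ℤ} (h : (q : ℂˣ) ^ d = 1) : d = 0 := by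
  by_contra hd
  have hpos : 0 < d.natAbs := Int.natAbs_pos.mpr hd
  have h1 : (q : ℂˣ) ^ (d.natAbs : ℤ) = 1 := by
    rcases Int.natAbs_eq d with h' | h'
    · rw [← h', h]
    · rw [show (d.natAbs : ℤ) = -d by omega, zpow_neg, h, inv_one]
  have h2 : ((q : ℂˣ) ^ d.natAbs : ℂˣ) = 1 := by rw [← zpow_natCast]; exact h1
  exact hq d.natAbs hpos (by
    have := congrArg (Units.val) h2
    simpa using this)

lemma qzpow_inj (hq : ∀ n : ℕ, 0 < n → (q : ℂ) ^ n ≠ 1) {m m' : ℤ} (h : (q : ℂˣ) ^ m = (q : ℂˣ) ^ m') : m = m' := by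
  have h1 : (q : ℂˣ) ^ (m - m') = 1 := by
    rw [zpow_sub, h, mul_inv_cancel]
  have := qpow_eq_one hq h1
  omega

lemma jC_cube : jC ^ 3 = 1 := by
  ext
  show (Complex.exp (2 * Real.pi * Complex.I / 3)) ^ 3 = 1
  rw [← Complex.exp_nat_mul]
  rw [show ((3:ℕ) : ℂ) * (2 * Real.pi * Complex.I / 3) = 2 * Real.pi * Complex.I by push_cast; ring]
  exact Complex.exp_two_pi_mul_I

lemma two_pi_I_ne_zero : 2 * (Real.pi : ℂ) * Complex.I ≠ 0 := by
  simp [Real.pi_ne_zero, Complex.I_ne_zero]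

lemma jC_pow_ne_one {e : ℕ} (h1 : 0 < e) (h2 : e < 3) : jC ^ e ≠ 1 := by
  intro h
  have hv : Complex.exp ((e : ℂ) * (2 * Real.pi * Complex.I / 3)) = 1 := by
    have := congrArg Units.val h
    simpa [jC, ← Complex.exp_nat_mul] using this
  rw [Complex.exp_eq_one_iff] at hv
  obtain ⟨n, hn⟩ := hv
  have key : (e : ℂ) * (2 * Real.pi * Complex.I) = (3 * n : ℂ) * (2 * Real.pi * Complex.I) := by
    linear_combination 3 * hn
  have h3 := mul_right_cancel₀ two_pi_I_ne_zero key
  have h4 : (e : ℤ) = 3 * n := by exact_mod_cast h3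
  interval_cases e <;> omega

lemma jC_pow_inj {e e' : ℕ} (he : e < 3) (he' : e' < 3) (h : jC ^ e = jC ^ e') : e = e' := by
  rcases Nat.lt_or_ge e e' with hlt | hge
  · exfalso
    have : jC ^ (e' - e) = 1 := by
      have := congrArg (fun x => x * (jC ^ e)⁻¹) h
      simpa [← pow_sub jC (Nat.le_of_lt hlt)] using this.symm
    exact jC_pow_ne_one (by omega) (by omega) this
  · rcases Nat.lt_or_ge e' e with hlt | hge'
    · exfalso
      have : jC ^ (e - e') = 1 := by
        have := congrArg (fun x => x * (jC ^ e')⁻¹) h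
        simpa [← pow_sub jC (Nat.le_of_lt hlt)] using this
      exact jC_pow_ne_one (by omega) (by omega) this
    · omega

end Aux
section Aux2
variable {q a : ℂˣ}

lemma gen1_eq_iff (hq : ∀ n : ℕ, 0 < n → (q : ℂ) ^ n ≠ 1) {m m' : ℤ} {e e' : ℕ}
    (he : e < 3) (he' : e' < 3) :
    a * q ^ m * jC ^ e = a * q ^ m' * jC ^ e' ↔ m = m' ∧ e = e' := by
  constructor
  · intro h
    have h1 : (q:ℂˣ) ^ m * jC ^ e = q ^ m' * jC ^ e' := by
      have := h
      rw [mul_assoc, mul_assoc] at this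
      exact mul_left_cancel this
    have hcube : ∀ (mm : ℤ) (ee : ℕ), ((q:ℂˣ) ^ mm * jC ^ ee) ^ 3 = q ^ (3 * mm) := by
      intro mm ee
      rw [mul_pow, ← pow_mul, mul_comm ee 3, pow_mul, jC_cube, one_pow, mul_one,
        ← zpow_natCast ((q:ℂˣ) ^ mm) 3, ← zpow_mul]
      norm_num [mul_comm]
    have h2 : (q:ℂˣ) ^ (3*m) = q ^ (3*m') := by
      rw [← hcube m e, ← hcube m' e', h1]
    have hm : m = m' := by have := qzpow_inj hq h2; omega
    subst hm
    have h3 : (jC : ℂˣ) ^ e = jC ^ e' := mul_left_cancel h1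
    exact ⟨rfl, jC_pow_inj he he' h3⟩
  · rintro ⟨rfl, rfl⟩; rfl

lemma gen2_eq_iff (hq : ∀ n : ℕ, 0 < n → (q : ℂ) ^ n ≠ 1) {m m' : ℤ} :
    a ^ 3 * q ^ m = a ^ 3 * q ^ m' ↔ m = m' := by
  constructor
  · intro h; exact qzpow_inj hq (mul_left_cancel h)
  · rintro rfl; rfl

end Aux2
/-- coefficient of a `Z₁`-generator in a box -/
def g1 : BB → ℤ → ℕ → ℤ
  | .b1, d, e => if d = 0 ∧ e = 0 then 1 else 0
  | .b2, d, e => if d = 2 ∧ e = 0 then -1 else 0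
  | .b3, d, e => if d = 2 ∧ (e = 1 ∨ e = 2) then 1 else 0
  | .b4, d, e => if d = 2 ∧ e = 1 then 1 else if d = 4 ∧ e = 2 then -1 else 0
  | .b4', d, e => if d = 2 ∧ e = 2 then 1 else if d = 4 ∧ e = 1 then -1 else 0
  | .b3', d, e => if d = 4 ∧ (e = 1 ∨ e = 2) then -1 else 0
  | .b2', d, e => if d = 4 ∧ e = 0 then 1 else 0
  | .b1', d, e => if d = 6 ∧ e = 0 then -1 else 0

/-- coefficient of a `Z₂`-generator in a box -/
def g2 : BB → ℤ → ℤ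
  | .b2, d => if d = 3 then 1 else 0
  | .b3, d => if d = 9 then -1 else 0
  | .b3', d => if d = 9 then 1 else 0
  | .b2', d => if d = 15 then -1 else 0
  | _, _ => 0

section Aux3
variable {q : ℂˣ} (a : ℂˣ)

lemma nf0 (u : ℤ) : a * q ^ u = a * q ^ u * jC ^ 0 := by simp

lemma nfn (u : ℤ) (n : ℕ) : a * q ^ u * q ^ n = a * q ^ (u + n) * jC ^ 0 := by
  rw [pow_zero, mul_one, mul_assoc, ← zpow_natCast q n, ← zpow_add]

lemma nfj (u : ℤ) (n : ℕ) : a * q ^ u * q ^ n * jC = a * q ^ (u + n) * jC ^ 1 := by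
  rw [pow_one, mul_assoc a, ← zpow_natCast q n, ← zpow_add]

lemma nfj2 (u : ℤ) (n : ℕ) : a * q ^ u * q ^ n * jC ^ 2 = a * q ^ (u + n) * jC ^ 2 := by
  rw [mul_assoc a, ← zpow_natCast q n, ← zpow_add]

lemma nfc (u : ℤ) (n : ℕ) : (a * q ^ u) ^ 3 * q ^ n = a ^ 3 * q ^ (3 * u + n) := by
  rw [mul_pow, ← zpow_natCast (q ^ u) 3, ← zpow_mul, mul_assoc, ← zpow_natCast q n, ← zpow_add]
  norm_num [mul_comm]

end Aux3

section Aux4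
variable {q a : ℂˣ}

lemma S00 (hq : ∀ n : ℕ, 0 < n → (q : ℂ) ^ n ≠ 1) {m M : ℤ} {e E : ℕ} (he : e < 3) (hE : E < 3) :
    (Finsupp.single ((0 : Fin 2), a * q ^ m * jC ^ e) (1:ℤ)) ((0 : Fin 2), a * q ^ M * jC ^ E)
      = if m = M ∧ e = E then 1 else 0 := by
  rw [Finsupp.single_apply]
  congr 1
  simp only [Prod.mk.injEq, true_and, eq_iff_iff]
  exact gen1_eq_iff hq he hE

lemma S10 (x y : ℂˣ) :
    (Finsupp.single ((1 : Fin 2), x) (1:ℤ)) ((0 : Fin 2), y) = 0 := by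
  rw [Finsupp.single_apply, if_neg]
  simp [Prod.mk.injEq]

lemma S01 (x y : ℂˣ) :
    (Finsupp.single ((0 : Fin 2), x) (1:ℤ)) ((1 : Fin 2), y) = 0 := by
  rw [Finsupp.single_apply, if_neg]
  simp [Prod.mk.injEq]

lemma S11 (hq : ∀ n : ℕ, 0 < n → (q : ℂ) ^ n ≠ 1) {m M : ℤ} :
    (Finsupp.single ((1 : Fin 2), a ^ 3 * q ^ m) (1:ℤ)) ((1 : Fin 2), a ^ 3 * q ^ M)
      = if m = M then 1 else 0 := by
  rw [Finsupp.single_apply]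
  congr 1
  simp only [Prod.mk.injEq, true_and, eq_iff_iff]
  exact gen2_eq_iff hq

end Aux4
section Aux5
variable {q a : ℂˣ}

lemma S00' (hq : ∀ n : ℕ, 0 < n → (q : ℂ) ^ n ≠ 1) {m M : ℤ} {E : ℕ} (hE : E < 3) :
    (Finsupp.single ((0 : Fin 2), a * q ^ m) (1:ℤ)) ((0 : Fin 2), a * q ^ M * jC ^ E)
      = if m = M ∧ 0 = E then 1 else 0 := by
  rw [nf0 a m, S00 hq (by omega) hE]

lemma box_apply1 (hq : ∀ n : ℕ, 0 < n → (q : ℂ) ^ n ≠ 1) (β : BB) (u M : ℤ) (E : ℕ) (hE : E < 3) :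
    (box q β (a * q ^ u)) ((0 : Fin 2), a * q ^ M * jC ^ E) = g1 β (M - u) E := by
  have e0 := (by omega : (0:ℕ) < 3)
  have e1 := (by omega : (1:ℕ) < 3)
  have e2 := (by omega : (2:ℕ) < 3)
  cases β
  case b1 =>
    simp only [box, Zv]
    rw [S00' hq hE]
    simp only [g1]; split_ifs <;> omega
  case b2 =>
    simp only [box, Zv, Finsupp.add_apply, Finsupp.neg_apply]
    rw [nfn a u 2, nfc a u 3, S00 hq e0 hE, S10]
    simp only [g1]; split_ifs <;> omega
  case b3 =>
    simp only [box, Zv, Finsupp.add_apply, Finsupp.neg_apply]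
    rw [nfc a u 9, nfj a u 2, nfj2 a u 2, S10, S00 hq e1 hE, S00 hq e2 hE]
    simp only [g1]; split_ifs <;> omega
  case b4 =>
    simp only [box, Zv, Finsupp.sub_apply]
    rw [nfj a u 2, nfj2 a u 4, S00 hq e1 hE, S00 hq e2 hE]
    simp only [g1]; split_ifs <;> omega
  case b4' =>
    simp only [box, Zv, Finsupp.sub_apply]
    rw [nfj2 a u 2, nfj a u 4, S00 hq e2 hE, S00 hq e1 hE]
    simp only [g1]; split_ifs <;> omega
  case b3' =>
    simp only [box, Zv, Finsupp.add_apply, Finsupp.neg_apply, Finsupp.sub_apply]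
    rw [nfj a u 4, nfj2 a u 4, nfc a u 9, S00 hq e1 hE, S00 hq e2 hE, S10]
    simp only [g1]; split_ifs <;> omega
  case b2' =>
    simp only [box, Zv, Finsupp.sub_apply]
    rw [nfn a u 4, nfc a u 15, S00 hq e0 hE, S10]
    simp only [g1]; split_ifs <;> omega
  case b1' =>
    simp only [box, Zv, Finsupp.neg_apply]
    rw [nfn a u 6, S00 hq e0 hE]
    simp only [g1]; split_ifs <;> omega

lemma box_apply2 (hq : ∀ n : ℕ, 0 < n → (q : ℂ) ^ n ≠ 1) (β : BB) (u M : ℤ) :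
    (box q β (a * q ^ u)) ((1 : Fin 2), a ^ 3 * q ^ M) = g2 β (M - 3 * u) := by
  cases β
  case b1 =>
    simp only [box, Zv]
    rw [S01]
    simp [g2]
  case b2 =>
    simp only [box, Zv, Finsupp.add_apply, Finsupp.neg_apply]
    rw [nfc a u 3, S01, S11 hq]
    simp only [g2]; split_ifs <;> omega
  case b3 =>
    simp only [box, Zv, Finsupp.add_apply, Finsupp.neg_apply]
    rw [nfc a u 9, S01, S01, S11 hq]
    simp only [g2]; split_ifs <;> omega
  case b4 =>
    simp only [box, Zv, Finsupp.sub_apply]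
    rw [S01, S01]
    simp [g2]
  case b4' =>
    simp only [box, Zv, Finsupp.sub_apply]
    rw [S01, S01]
    simp [g2]
  case b3' =>
    simp only [box, Zv, Finsupp.add_apply, Finsupp.neg_apply, Finsupp.sub_apply]
    rw [nfc a u 9, S01, S01, S11 hq]
    simp only [g2]; split_ifs <;> omega
  case b2' =>
    simp only [box, Zv, Finsupp.sub_apply]
    rw [nfc a u 15, S01, S11 hq]
    simp only [g2]; split_ifs <;> omega
  case b1' =>
    simp only [box, Zv, Finsupp.neg_apply]
    rw [S01]
    simp [g2]

end Aux5
section Aux6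
variable {q a : ℂˣ}

lemma m2_apply1 (hq : ∀ n : ℕ, 0 < n → (q : ℂ) ^ n ≠ 1) {k : ℕ} (T : Fin 2 → Fin k → BB)
    (M : ℤ) (E : ℕ) (hE : E < 3) :
    (m2 q T a) ((0 : Fin 2), a * q ^ M * jC ^ E)
      = ∑ i : Fin 2, ∑ p : Fin k, g1 (T i p) (M - 2 * ((p : ℤ) - (i : ℤ))) E := by
  unfold m2
  rw [Finsupp.finset_sum_apply]
  refine Finset.sum_congr rfl fun i _ => ?_
  rw [Finsupp.finset_sum_apply]
  exact Finset.sum_congr rfl fun p _ => box_apply1 hq _ _ _ _ hE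

lemma m2_apply2 (hq : ∀ n : ℕ, 0 < n → (q : ℂ) ^ n ≠ 1) {k : ℕ} (T : Fin 2 → Fin k → BB)
    (M : ℤ) :
    (m2 q T a) ((1 : Fin 2), a ^ 3 * q ^ M)
      = ∑ i : Fin 2, ∑ p : Fin k, g2 (T i p) (M - 3 * (2 * ((p : ℤ) - (i : ℤ)))) := by
  unfold m2
  rw [Finsupp.finset_sum_apply]
  refine Finset.sum_congr rfl fun i _ => ?_
  rw [Finsupp.finset_sum_apply]
  exact Finset.sum_congr rfl fun p _ => box_apply2 hq _ _ _

end Aux6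

lemma sum2_neg {k : ℕ} {t : Fin 2 → Fin k → ℤ} (i₀ : Fin 2) (p₀ : Fin k)
    (h1 : t i₀ p₀ ≤ -1) (h2 : ∀ i p, ¬(i = i₀ ∧ p = p₀) → t i p ≤ 0) :
    ∑ i : Fin 2, ∑ p : Fin k, t i p < 0 := by
  have hb : ∀ i p, t i p ≤ if i = i₀ ∧ p = p₀ then -1 else 0 := by
    intro i p; by_cases h : i = i₀ ∧ p = p₀
    · rw [if_pos h]; obtain ⟨rfl, rfl⟩ := h; exact h1
    · rw [if_neg h]; exact h2 i p h
  have hle : ∑ i : Fin 2, ∑ p : Fin k, t i p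
      ≤ ∑ i : Fin 2, ∑ p : Fin k, (if i = i₀ ∧ p = p₀ then (-1 : ℤ) else 0) :=
    Finset.sum_le_sum fun i _ => Finset.sum_le_sum fun p _ => hb i p
  have heq : ∑ i : Fin 2, ∑ p : Fin k, (if i = i₀ ∧ p = p₀ then (-1 : ℤ) else 0) = -1 := by
    simp [ite_and, Finset.sum_ite_eq']
  omega

lemma g1_nonpos {β : BB} {d : ℤ} {e : ℕ}
    (h1 : β = .b1 → ¬(d = 0 ∧ e = 0))
    (h3 : β = .b3 → ¬(d = 2 ∧ (e = 1 ∨ e = 2)))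
    (h4 : β = .b4 → ¬(d = 2 ∧ e = 1))
    (h4' : β = .b4' → ¬(d = 2 ∧ e = 2))
    (h2' : β = .b2' → ¬(d = 4 ∧ e = 0)) : g1 β d e ≤ 0 := by
  cases β <;> simp_all [g1] <;> split_ifs <;> omega

lemma g2_nonpos {β : BB} {d : ℤ}
    (h2 : β = .b2 → d ≠ 3) (h3' : β = .b3' → d ≠ 9) : g2 β d ≤ 0 := by
  cases β <;> simp_all [g2] <;> split_ifs <;> omega

lemma BB.le_trans {x y z : BB} (h1 : BB.le x y) (h2 : BB.le y z) : BB.le x z := by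
  rcases h1 with rfl | h1
  · exact h2
  · rcases h2 with rfl | h2
    · exact Or.inr h1
    · exact Or.inr (lt_trans h1 h2)

lemma tab1_le {k : ℕ} {f : Fin k → BB} (h : IsTab1 k f) (p p' : Fin k) (hpp' : p ≤ p') :
    BB.le (f p) (f p') := by
  obtain ⟨d, hd⟩ : ∃ d : ℕ, (p' : ℕ) = (p : ℕ) + d := ⟨p' - p, by omega⟩
  induction d generalizing p' with
  | zero =>
    have : p = p' := Fin.ext (by omega)
    subst this; exact Or.inl rfl
  | succ n ih =>
    have hn : (p : ℕ) + n < k := by omega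
    have h1 : BB.le (f p) (f ⟨(p : ℕ) + n, hn⟩) := ih ⟨(p : ℕ) + n, hn⟩ (by
      simp [Fin.le_def]) (by simp)
    have h2 := h ((p : ℕ) + n) (by omega)
    have h3 : f ⟨(p : ℕ) + n + 1, by omega⟩ = f p' := by congr 1; exact Fin.ext (by simp; omega)
    exact BB.le_trans h1 (h3 ▸ h2)
lemma BB.le_b1 {x : BB} (h : BB.le x .b1) : x = .b1 := by
  cases x <;> simp_all [BB.le, BB.rank]

lemma BB.le_b2 {x : BB} (h : BB.le x .b2) : x = .b1 ∨ x = .b2 := by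
  cases x <;> simp_all [BB.le, BB.rank]

lemma chain_s17 {q a : ℂˣ} (hq : ∀ n : ℕ, 0 < n → (q : ℂ) ^ n ≠ 1) {k : ℕ} (hk : 1 ≤ k)
    (T : Fin 2 → Fin k → BB)
    (hmono : ∀ (i : Fin 2) (p p' : Fin k), p ≤ p' → BB.le (T i p) (T i p'))
    (hcol : ∀ p : Fin k, ¬ BB.le (T 1 p) (T 0 p))
    (hdom : ∀ lb : Fin 2 × ℂˣ, 0 ≤ (m2 q T a) lb) :
    ∀ p : Fin k, T 0 p = BB.b1 ∧ T 1 p = BB.b2 := by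
  have hK' : k - 1 < k := by omega
  set K : Fin k := ⟨k - 1, hK'⟩ with hKdef
  have hKv : (K : ℤ) = (k : ℤ) - 1 := by simp [hKdef]; omega
  have hi0v : ((0 : Fin 2) : ℤ) = 0 := by norm_num
  have hi1v : ((1 : Fin 2) : ℤ) = 1 := by norm_num
  have hint : ∀ i : Fin 2, (i : ℤ) = 0 ∨ (i : ℤ) = 1 := fun i => by
    have := i.isLt; omega
  have hplt : ∀ p : Fin k, (p : ℤ) < k := fun p => by have := p.isLt; omega
  have hp0 : ∀ p : Fin k, 0 ≤ (p : ℤ) := fun p => by positivity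
  have hi0 : ∀ i : Fin 2, (i : ℤ) = 0 → i = 0 := fun i h => by
    have : (i : ℕ) = 0 := by omega
    exact Fin.ext (by simp [this])
  have hi1 : ∀ i : Fin 2, (i : ℤ) = 1 → i = 1 := fun i h => by
    have : (i : ℕ) = 1 := by omega
    exact Fin.ext (by simp [this])
  have hpKeq : ∀ p : Fin k, (p : ℤ) = (k : ℤ) - 1 → p = K := fun p h => by
    refine Fin.ext ?_
    simp only [hKdef]
    omega
  have hpleK : ∀ p : Fin k, p ≤ K := fun p => by
    rw [Fin.le_def]; simp only [hKdef]; have := p.isLt; omega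
  have hA : ∀ (M : ℤ) (E : ℕ), E < 3 →
      (0:ℤ) ≤ ∑ i : Fin 2, ∑ p : Fin k, g1 (T i p) (M - 2 * ((p : ℤ) - (i : ℤ))) E := by
    intro M E hE; rw [← m2_apply1 hq T M E hE]; exact hdom _
  have hB : ∀ M : ℤ,
      (0:ℤ) ≤ ∑ i : Fin 2, ∑ p : Fin k, g2 (T i p) (M - 3 * (2 * ((p : ℤ) - (i : ℤ)))) := by
    intro M; rw [← m2_apply2 hq T M]; exact hdom _
  -- Step 1 : T 0 K ≠ b3
  have hC5 : T 0 K ≠ .b3 := by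
    intro hT
    refine absurd (hB (6 * (k:ℤ) + 3)) (not_le.mpr (sum2_neg 0 K ?_ ?_))
    · have hd : 6 * (k:ℤ) + 3 - 3 * (2 * ((K : ℤ) - ((0 : Fin 2) : ℤ))) = 9 := by
        rw [hKv, hi0v]; ring
      rw [hd, hT]; norm_num [g2]
    · intro i p hne
      refine g2_nonpos ?_ ?_
      · intro _ hd
        have := hint i; have := hplt p; have := hp0 p; omega
      · intro hb hd
        have hi := hint i; have hp := hplt p; have hp' := hp0 p
        have hiz : (i : ℤ) = 0 := by omega
        have hpz : (p : ℤ) = (k:ℤ) - 1 := by omega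
        exact hne ⟨hi0 i hiz, hpKeq p hpz⟩
  -- Step 2 : T 0 K ≠ b2'
  have hC6 : T 0 K ≠ .b2' := by
    intro hT
    refine absurd (hB (6 * (k:ℤ) + 9)) (not_le.mpr (sum2_neg 0 K ?_ ?_))
    · have hd : 6 * (k:ℤ) + 9 - 3 * (2 * ((K : ℤ) - ((0 : Fin 2) : ℤ))) = 15 := by
        rw [hKv, hi0v]; ring
      rw [hd, hT]; norm_num [g2]
    · intro i p _
      refine g2_nonpos ?_ ?_ <;>
        (intro _ hd; have := hint i; have := hplt p; have := hp0 p; omega)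
  -- Step 3 : T 0 K ∉ {b3', b4'}
  have hCA : ¬(T 0 K = .b3' ∨ T 0 K = .b4') := by
    intro hT
    refine absurd (hA (2 * (k:ℤ) + 2) 1 (by omega)) (not_le.mpr (sum2_neg 0 K ?_ ?_))
    · have hd : 2 * (k:ℤ) + 2 - 2 * ((K : ℤ) - ((0 : Fin 2) : ℤ)) = 4 := by
        rw [hKv, hi0v]; ring
      rw [hd]; rcases hT with hT | hT <;> rw [hT] <;> norm_num [g1]
    · intro i p _
      refine g1_nonpos (fun _ => by omega) ?_ ?_ (fun _ => by omega) (fun _ => by omega) <;>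
        (intro _ hd; have := hint i; have := hplt p; have := hp0 p; omega)
  -- Step 4 : T 0 K ≠ b4
  have hCB : T 0 K ≠ .b4 := by
    intro hT
    refine absurd (hA (2 * (k:ℤ) + 2) 2 (by omega)) (not_le.mpr (sum2_neg 0 K ?_ ?_))
    · have hd : 2 * (k:ℤ) + 2 - 2 * ((K : ℤ) - ((0 : Fin 2) : ℤ)) = 4 := by
        rw [hKv, hi0v]; ring
      rw [hd, hT]; norm_num [g1]
    · intro i p _
      refine g1_nonpos (fun _ => by omega) ?_ (fun _ => by omega) ?_ (fun _ => by omega) <;>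
        (intro _ hd; have := hint i; have := hplt p; have := hp0 p; omega)
  -- Step 5 : T 0 K ≠ b1'
  have hC2 : T 0 K ≠ .b1' := by
    intro hT
    refine absurd (hA (2 * (k:ℤ) + 4) 0 (by omega)) (not_le.mpr (sum2_neg 0 K ?_ ?_))
    · have hd : 2 * (k:ℤ) + 4 - 2 * ((K : ℤ) - ((0 : Fin 2) : ℤ)) = 6 := by
        rw [hKv, hi0v]; ring
      rw [hd, hT]; norm_num [g1]
    · intro i p _
      refine g1_nonpos ?_ (fun _ => by omega) (fun _ => by omega) (fun _ => by omega) ?_ <;>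
        (intro _ hd; have := hint i; have := hplt p; have := hp0 p; omega)
  have hT0K : T 0 K = .b1 ∨ T 0 K = .b2 := by
    cases hx : T 0 K
    · exact Or.inl rfl
    · exact Or.inr rfl
    · exact absurd hx hC5
    · exact absurd hx hCB
    · exact absurd (Or.inr hx) hCA
    · exact absurd (Or.inl hx) hCA
    · exact absurd hx hC6
    · exact absurd hx hC2
  -- Step 6 : T 1 K ≠ b2'
  have hC8 : T 1 K ≠ .b2' := by
    intro hT
    refine absurd (hB (6 * (k:ℤ) + 3)) (not_le.mpr (sum2_neg 1 K ?_ ?_))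
    · have hd : 6 * (k:ℤ) + 3 - 3 * (2 * ((K : ℤ) - ((1 : Fin 2) : ℤ))) = 15 := by
        rw [hKv, hi1v]; ring
      rw [hd, hT]; norm_num [g2]
    · intro i p hne
      refine g2_nonpos ?_ ?_
      · intro _ hd
        have := hint i; have := hplt p; have := hp0 p; omega
      · intro hb hd
        have hi := hint i; have hp := hplt p; have hp' := hp0 p
        have hiz : (i : ℤ) = 0 := by omega
        have hpz : (p : ℤ) = (k:ℤ) - 1 := by omega
        rw [hi0 i hiz, hpKeq p hpz] at hb
        rcases hT0K with h' | h' <;> rw [h'] at hb <;> exact BB.noConfusion hb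
  -- Step 7 : T 0 K ≠ b2, hence T 0 K = b1
  have hC12 : T 0 K ≠ .b2 := by
    intro hT
    refine absurd (hA (2 * (k:ℤ)) 0 (by omega)) (not_le.mpr (sum2_neg 0 K ?_ ?_))
    · have hd : 2 * (k:ℤ) - 2 * ((K : ℤ) - ((0 : Fin 2) : ℤ)) = 2 := by
        rw [hKv, hi0v]; ring
      rw [hd, hT]; norm_num [g1]
    · intro i p hne
      refine g1_nonpos ?_ (fun _ => by omega) (fun _ => by omega) (fun _ => by omega) ?_
      · intro _ hd
        have := hint i; have := hplt p; have := hp0 p; omega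
      · intro hb hd
        have hi := hint i; have hp := hplt p; have hp' := hp0 p
        rcases hi with hiz | hiz
        · -- i = 0, (p:ℤ) = k - 2 : T 0 p = b2' contradicts monotonicity below b2
          have hle := hmono i p K (hpleK p)
          rw [hi0 i hiz] at hb hle
          rw [hb, hT] at hle
          rcases hle with h' | h' <;> simp [BB.rank] at h'
        · -- i = 1, (p:ℤ) = k - 1 : T 1 K = b2' contradicts hC8
          have hpz : (p : ℤ) = (k:ℤ) - 1 := by omega
          rw [hi1 i hiz, hpKeq p hpz] at hb
          exact hC8 hb
  have hT0Kb1 : T 0 K = .b1 := by tauto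
  -- Step 8 : the whole first row is b1
  have hT0 : ∀ p : Fin k, T 0 p = .b1 := by
    intro p
    have := hmono 0 p K (hpleK p)
    rw [hT0Kb1] at this
    exact BB.le_b1 this
  -- Step 9 : T 1 K ≠ b1'
  have hC7 : T 1 K ≠ .b1' := by
    intro hT
    refine absurd (hA (2 * (k:ℤ) + 2) 0 (by omega)) (not_le.mpr (sum2_neg 1 K ?_ ?_))
    · have hd : 2 * (k:ℤ) + 2 - 2 * ((K : ℤ) - ((1 : Fin 2) : ℤ)) = 6 := by
        rw [hKv, hi1v]; ring
      rw [hd, hT]; norm_num [g1]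
    · intro i p hne
      refine g1_nonpos ?_ (fun _ => by omega) (fun _ => by omega) (fun _ => by omega) ?_
      · intro _ hd
        have := hint i; have := hplt p; have := hp0 p; omega
      · intro hb hd
        have hi := hint i; have hp := hplt p; have hp' := hp0 p
        have hiz : (i : ℤ) = 0 := by omega
        rw [hi0 i hiz, hT0 p] at hb
        exact BB.noConfusion hb
  -- Step 10 : T 1 K ∉ {b3', b4'}
  have hC9 : ¬(T 1 K = .b3' ∨ T 1 K = .b4') := by
    intro hT
    refine absurd (hA (2 * (k:ℤ)) 1 (by omega)) (not_le.mpr (sum2_neg 1 K ?_ ?_))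
    · have hd : 2 * (k:ℤ) - 2 * ((K : ℤ) - ((1 : Fin 2) : ℤ)) = 4 := by
        rw [hKv, hi1v]; ring
      rw [hd]; rcases hT with hT | hT <;> rw [hT] <;> norm_num [g1]
    · intro i p hne
      refine g1_nonpos (fun _ => by omega) ?_ ?_ (fun _ => by omega) (fun _ => by omega) <;>
      · intro hb hd
        have hi := hint i; have hp := hplt p; have hp' := hp0 p
        have hiz : (i : ℤ) = 0 := by omega
        rw [hi0 i hiz, hT0 p] at hb
        exact BB.noConfusion hb
  -- Step 11 : T 1 K ≠ b4
  have hC10 : T 1 K ≠ .b4 := by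
    intro hT
    refine absurd (hA (2 * (k:ℤ)) 2 (by omega)) (not_le.mpr (sum2_neg 1 K ?_ ?_))
    · have hd : 2 * (k:ℤ) - 2 * ((K : ℤ) - ((1 : Fin 2) : ℤ)) = 4 := by
        rw [hKv, hi1v]; ring
      rw [hd, hT]; norm_num [g1]
    · intro i p hne
      refine g1_nonpos (fun _ => by omega) ?_ (fun _ => by omega) ?_ (fun _ => by omega) <;>
      · intro hb hd
        have hi := hint i; have hp := hplt p; have hp' := hp0 p
        have hiz : (i : ℤ) = 0 := by omega
        rw [hi0 i hiz, hT0 p] at hb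
        exact BB.noConfusion hb
  -- Step 12 : T 1 K ≠ b3
  have hC11 : T 1 K ≠ .b3 := by
    intro hT
    refine absurd (hB (6 * (k:ℤ) - 3)) (not_le.mpr (sum2_neg 1 K ?_ ?_))
    · have hd : 6 * (k:ℤ) - 3 - 3 * (2 * ((K : ℤ) - ((1 : Fin 2) : ℤ))) = 9 := by
        rw [hKv, hi1v]; ring
      rw [hd, hT]; norm_num [g2]
    · intro i p hne
      refine g2_nonpos ?_ ?_
      · intro hb hd
        have hi := hint i; have hp := hplt p; have hp' := hp0 p
        have hiz : (i : ℤ) = 0 := by omega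
        rw [hi0 i hiz, hT0 p] at hb
        exact BB.noConfusion hb
      · intro hb hd
        have hi := hint i; have hp := hplt p; have hp' := hp0 p
        rcases hi with hiz | hiz
        · rw [hi0 i hiz, hT0 p] at hb
          exact BB.noConfusion hb
        · have hpz : (p : ℤ) = (k:ℤ) - 1 := by omega
          exact hne ⟨hi1 i hiz, hpKeq p hpz⟩
  -- Step 13 : T 1 K = b2
  have hT1K : T 1 K = .b2 := by
    cases hx : T 1 K
    · exfalso; apply hcol K; rw [hx, hT0Kb1]; exact Or.inl rfl
    · rfl
    · exact absurd hx hC11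
    · exact absurd hx hC10
    · exact absurd (Or.inr hx) hC9
    · exact absurd (Or.inl hx) hC9
    · exact absurd hx hC8
    · exact absurd hx hC7
  -- Step 14 : the whole second row is b2
  intro p
  refine ⟨hT0 p, ?_⟩
  have := hmono 1 p K (hpleK p)
  rw [hT1K] at this
  rcases BB.le_b2 this with h | h
  · exfalso; apply hcol p; rw [h, hT0 p]; exact Or.inl rfl
  · exact h
lemma m2_std {q a : ℂˣ} {k : ℕ} (T : Fin 2 → Fin k → BB)
    (h : ∀ p : Fin k, T 0 p = BB.b1 ∧ T 1 p = BB.b2) :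
    m2 q T a = ∑ p : Fin k, Zv 1 (a ^ 3 * q ^ (6 * (p : ℤ) - 3)) := by
  unfold m2
  rw [Fin.sum_univ_two]
  have e0 : ∑ p : Fin k, box q (T 0 p) (a * q ^ (2 * ((p : ℤ) - ((0 : Fin 2) : ℤ))))
      = ∑ p : Fin k, Zv 0 (a * q ^ (2 * (p : ℤ))) := by
    refine Finset.sum_congr rfl fun p _ => ?_
    rw [(h p).1]
    simp only [box]
    exact congrArg (fun z : ℤ => Zv 0 (a * q ^ z)) (by push_cast [Fin.val_zero]; ring)
  have e1 : ∑ p : Fin k, box q (T 1 p) (a * q ^ (2 * ((p : ℤ) - ((1 : Fin 2) : ℤ))))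
      = ∑ p : Fin k, (-Zv 0 (a * q ^ (2 * (p : ℤ))) + Zv 1 (a ^ 3 * q ^ (6 * (p : ℤ) - 3))) := by
    refine Finset.sum_congr rfl fun p _ => ?_
    rw [(h p).2]
    simp only [box]
    have hu1 : a * q ^ (2 * ((p : ℤ) - ((1 : Fin 2) : ℤ))) * q ^ (2:ℕ)
        = a * q ^ (2 * (p : ℤ)) := by
      rw [nfn, pow_zero, mul_one]
      exact congrArg (fun z : ℤ => a * q ^ z) (by push_cast [Fin.val_one]; ring)
    have hu2 : (a * q ^ (2 * ((p : ℤ) - ((1 : Fin 2) : ℤ)))) ^ 3 * q ^ (3:ℕ)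
        = a ^ 3 * q ^ (6 * (p : ℤ) - 3) := by
      rw [nfc]
      exact congrArg (fun z : ℤ => a ^ 3 * q ^ z) (by push_cast [Fin.val_one]; ring)
    rw [hu1, hu2]
  rw [e0, e1, Finset.sum_add_distrib, Finset.sum_neg_distrib]
  abel

lemma mstar_nonneg {q a : ℂˣ} {k : ℕ} (lb : Fin 2 × ℂˣ) :
    0 ≤ (∑ p : Fin k, Zv 1 (a ^ 3 * q ^ (6 * (p : ℤ) - 3))) lb := by
  rw [Finsupp.finset_sum_apply]
  refine Finset.sum_nonneg fun p _ => ?_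
  unfold Zv
  rw [Finsupp.single_apply]
  split_ifs <;> norm_num

lemma isTab2_of_std {k : ℕ} (T : Fin 2 → Fin k → BB)
    (h : ∀ p : Fin k, T 0 p = BB.b1 ∧ T 1 p = BB.b2) : IsTab2 k T := by
  refine ⟨?_, ?_, ?_, ?_⟩
  · intro i p hp
    fin_cases i
    · show BB.le (T 0 ⟨p, Nat.lt_of_succ_lt hp⟩) (T 0 ⟨p + 1, hp⟩)
      rw [(h _).1, (h _).1]; exact Or.inl rfl
    · show BB.le (T 1 ⟨p, Nat.lt_of_succ_lt hp⟩) (T 1 ⟨p + 1, hp⟩)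
      rw [(h _).2, (h _).2]; exact Or.inl rfl
  · intro p hle
    rw [(h p).1, (h p).2] at hle
    rcases hle with h' | h'
    · exact BB.noConfusion h'
    · simp [BB.rank] at h'
  · rintro ⟨p, p', -, -, h4, -⟩
    rw [(h p').1] at h4
    exact BB.noConfusion h4
  · rintro ⟨p, p', -, -, h4, -⟩
    rw [(h p').1] at h4
    exact BB.noConfusion h4
/-- `m^{(2)}_{T,a}` is dominant iff the first row of `T` is constant `1` and the second
row is constant `2`, in which case it is `∏_{p=1}^{k} Z_{2,a³q^{6p-9}}`; consequently the
sum `Σ_{T∈Tab(2,k)} m^{(2)}_{T,a}` has a unique dominant monomial, occurring with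
coefficient `1` (the Kirillov–Reshetikhin module `W^{(2)}_{k,a}` of type `D₄⁽³⁾`
is special). -/
theorem W2_special (q : ℂˣ) (hq : ∀ n : ℕ, 0 < n → (q : ℂ) ^ n ≠ 1)
    (k : ℕ) (hk : 1 ≤ k) (a : ℂˣ) :
    (∀ T : Fin 2 → Fin k → BB, IsTab2 k T →
      (((∀ lb : Fin 2 × ℂˣ, 0 ≤ (m2 q T a) lb) ↔
          ∀ p : Fin k, T 0 p = BB.b1 ∧ T 1 p = BB.b2) ∧
        ((∀ p : Fin k, T 0 p = BB.b1 ∧ T 1 p = BB.b2) →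
          m2 q T a = ∑ p : Fin k, Zv 1 (a ^ 3 * q ^ (6 * (p : ℤ) - 3)))))
    ∧ (S2 q k a).coeff (∑ p : Fin k, Zv 1 (a ^ 3 * q ^ (6 * (p : ℤ) - 3))) = 1
    ∧ (∀ m : Mon2, (S2 q k a).coeff m ≠ 0 → (∀ lb : Fin 2 × ℂˣ, 0 ≤ m lb) →
        m = ∑ p : Fin k, Zv 1 (a ^ 3 * q ^ (6 * (p : ℤ) - 3))) := by
  classical
  set mstar : Mon2 := ∑ p : Fin k, Zv 1 (a ^ 3 * q ^ (6 * (p : ℤ) - 3)) with hmstar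
  set Tstd : Fin 2 → Fin k → BB := fun i _ => if i = 0 then BB.b1 else BB.b2 with hTstd
  have hstdprop : ∀ p : Fin k, Tstd 0 p = BB.b1 ∧ Tstd 1 p = BB.b2 := by
    intro p
    constructor
    · simp [hTstd]
    · simp [hTstd]
  have hTeq : ∀ T : Fin 2 → Fin k → BB,
      (∀ p : Fin k, T 0 p = BB.b1 ∧ T 1 p = BB.b2) → T = Tstd := by
    intro T h
    funext i p
    fin_cases i
    · show T 0 p = Tstd 0 p
      rw [(h p).1, (hstdprop p).1]
    · show T 1 p = Tstd 1 p
      rw [(h p).2, (hstdprop p).2]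
  refine ⟨?_, ?_, ?_⟩
  · intro T hT2
    constructor
    · constructor
      · intro hdom
        exact chain_s17 hq hk T (fun i p p' hpp' => tab1_le (hT2.1 i) p p' hpp') hT2.2.1 hdom
      · intro hstd lb
        rw [m2_std T hstd]
        exact mstar_nonneg lb
    · intro hstd
      exact m2_std T hstd
  · show (S2 q k a).coeff mstar = 1
    unfold S2
    rw [AddMonoidAlgebra.coeff_sum, Finsupp.finset_sum_apply]
    have hterm : ∀ T : Fin 2 → Fin k → BB,
        (if IsTab2 k T then AddMonoidAlgebra.single (m2 q T a) (1:ℤ) else 0).coeff mstar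
          = if T = Tstd then 1 else 0 := by
      intro T
      by_cases hT : IsTab2 k T
      · rw [if_pos hT]
        show (Finsupp.single (m2 q T a) (1:ℤ)) mstar = _
        rw [Finsupp.single_apply]
        by_cases hm : m2 q T a = mstar
        · rw [if_pos hm, if_pos]
          have hdom : ∀ lb : Fin 2 × ℂˣ, 0 ≤ (m2 q T a) lb := by
            rw [hm]; exact fun lb => mstar_nonneg lb
          exact hTeq T (chain_s17 hq hk T (fun i p p' hpp' => tab1_le (hT.1 i) p p' hpp')
            hT.2.1 hdom)
        · rw [if_neg hm, if_neg]
          intro h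
          exact hm (by rw [h]; exact m2_std Tstd hstdprop)
      · rw [if_neg hT]
        rw [if_neg, AddMonoidAlgebra.coeff_zero, Finsupp.zero_apply]
        intro h
        exact hT (h ▸ isTab2_of_std Tstd hstdprop)
    rw [Finset.sum_congr rfl fun T _ => hterm T]
    simp [Finset.sum_ite_eq']
  · intro m hm hdomm
    unfold S2 at hm
    rw [AddMonoidAlgebra.coeff_sum, Finsupp.finset_sum_apply] at hm
    obtain ⟨T, -, hTne⟩ := Finset.exists_ne_zero_of_sum_ne_zero hm
    have hT : IsTab2 k T := by
      by_contra h
      rw [if_neg h, AddMonoidAlgebra.coeff_zero, Finsupp.zero_apply] at hTne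
      exact hTne rfl
    rw [if_pos hT] at hTne
    have hm2 : m2 q T a = m := by
      by_contra h
      apply hTne
      show (Finsupp.single (m2 q T a) (1:ℤ)) m = 0
      rw [Finsupp.single_apply, if_neg h]
    have hdom' : ∀ lb : Fin 2 × ℂˣ, 0 ≤ (m2 q T a) lb := by
      rw [hm2]; exact hdomm
    have hstd := chain_s17 hq hk T (fun i p p' hpp' => tab1_le (hT.1 i) p p' hpp') hT.2.1 hdom'
    rw [← hm2, m2_std T hstd]
end
end
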